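/- arXiv:2603.16582 — 9 statements merged into one kernel-verified Lean document; each statement's English description precedes it below -/
import Mathlib

section
/- Let U ⊆ ℂⁿ be an open set that is star-shaped with respect to a point a ∈ U, and let f : U → ℂ be holomorphic. For j = 1,…,n define F_j : U → ℂ by F_j(z) = ∫₀¹ f(a + t(z−a)) (z_j − a_j) dt. Then each F_j is complex differentiable on U with partial derivatives ∂F_j/∂z_k(z) = ∫₀¹ (∂f/∂z_k)(a + t(z−a)) · t · (z_j − a_j) dt for every k ∈ {1,…,n} \ {j}, and ∂F_j/∂z_j(z) = ∫₀¹ [ (∂f/∂z_j)(a + t(z−a)) · t · (z_j − a_j) + f(a + t(z−a)) ] dt. -/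
open MeasureTheory Metric Set

private lemma cauchy_bound {n : ℕ} {U : Set (Fin n → ℂ)} 
    {f : (Fin n → ℂ) → ℂ} (hf : ∀ z ∈ U, DifferentiableAt ℂ f z)
    {w : Fin n → ℂ} {r M : ℝ} (hr : 0 < r) (hball : closedBall w r ⊆ U)
    (hM : ∀ x ∈ closedBall w r, ‖f x‖ ≤ M) :
    ‖fderiv ℂ f w‖ ≤ M / r := by
  have hM0 : 0 ≤ M := le_trans (norm_nonneg _) (hM w (mem_closedBall_self hr.le))
  refine ContinuousLinearMap.opNorm_le_bound _ (div_nonneg hM0 hr.le) fun v => ?_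
  rcases eq_or_ne v 0 with rfl | hv
  · simp
  have hv0 : 0 < ‖v‖ := norm_pos_iff.2 hv
  set ρ := r / ‖v‖ with hρdef
  have hρ : 0 < ρ := div_pos hr hv0
  set g : ℂ → ℂ := fun lam => f (w + lam • v) with hg
  have hmap : ∀ lam : ℂ, lam ∈ closedBall (0:ℂ) ρ → w + lam • v ∈ closedBall w r := by
    intro lam hlam
    simp only [mem_closedBall, dist_eq_norm] at hlam ⊢
    have : ‖w + lam • v - w‖ = ‖lam‖ * ‖v‖ := by
      simp [norm_smul]
    rw [this]
    calc ‖lam‖ * ‖v‖ ≤ ρ * ‖v‖ := by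
          apply mul_le_mul_of_nonneg_right _ hv0.le
          simpa using hlam
      _ = r := by rw [hρdef]; field_simp
  have hdiff : ∀ lam ∈ closedBall (0:ℂ) ρ, DifferentiableAt ℂ g lam := by
    intro lam hlam
    have h1 : DifferentiableAt ℂ f (w + lam • v) := hf _ (hball (hmap lam hlam))
    exact h1.comp lam (by fun_prop)
  have hdc : DiffContOnCl ℂ g (ball 0 ρ) := by
    apply DifferentiableOn.diffContOnCl
    rw [closure_ball _ hρ.ne']
    exact fun lam hlam => (hdiff lam hlam).differentiableWithinAt
  have hderiv : HasDerivAt g (fderiv ℂ f w v) 0 := by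
    have h1 : DifferentiableAt ℂ f w := hf _ (hball (mem_closedBall_self hr.le))
    have inner : HasDerivAt (fun lam : ℂ => w + lam • v) v 0 := by
      simpa using ((hasDerivAt_id (0:ℂ)).smul_const v).const_add w
    have h2 : HasFDerivAt f (fderiv ℂ f w) (w + (0:ℂ) • v) := by
      simpa using h1.hasFDerivAt
    exact h2.comp_hasDerivAt 0 inner
  have key := Complex.norm_deriv_le_of_forall_mem_sphere_norm_le hρ hdc
    (fun z hz => hM _ (hmap z (sphere_subset_closedBall hz)))
  rw [hderiv.deriv] at key
  calc ‖fderiv ℂ f w v‖ ≤ M / ρ := key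
    _ = M / r * ‖v‖ := by rw [hρdef]; field_simp

private lemma key {n : ℕ} {U : Set (Fin n → ℂ)} (hU : IsOpen U)
    {a : Fin n → ℂ}
    (hstar : ∀ z ∈ U, ∀ t : ℝ, t ∈ Set.Icc (0 : ℝ) 1 → a + (t : ℂ) • (z - a) ∈ U)
    {f : (Fin n → ℂ) → ℂ} (hf : ∀ z ∈ U, DifferentiableAt ℂ f z)
    (z₀ : Fin n → ℂ) (hz₀ : z₀ ∈ U) :
    IntervalIntegrable (fun t : ℝ => f (a + (t:ℂ) • (z₀ - a))) volume 0 1 ∧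
    (∀ v : Fin n → ℂ, IntervalIntegrable
        (fun t : ℝ => (t:ℂ) * fderiv ℂ f (a + (t:ℂ) • (z₀ - a)) v) volume 0 1) ∧
    ∃ L : (Fin n → ℂ) →L[ℂ] ℂ,
      (∀ v, L v = ∫ t in (0:ℝ)..1, (t:ℂ) * fderiv ℂ f (a + (t:ℂ) • (z₀ - a)) v) ∧
      HasFDerivAt (fun z => ∫ t in (0:ℝ)..1, f (a + (t:ℂ) • (z - a))) L z₀ := by
  classical
  set γ : (Fin n → ℂ) → ℝ → (Fin n → ℂ) := fun z t => a + (t:ℂ) • (z - a) with hγ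
  have hγcont : ∀ z, Continuous (γ z) := by
    intro z; apply Continuous.add continuous_const
    exact (Complex.continuous_ofReal.smul continuous_const)
  have hS : IsCompact ((γ z₀) '' Icc 0 1) := isCompact_Icc.image (hγcont z₀)
  have hSU : (γ z₀) '' Icc 0 1 ⊆ U := by
    rintro _ ⟨t, ht, rfl⟩; exact hstar z₀ hz₀ t ht
  obtain ⟨δ, δpos, hδ⟩ := hS.exists_cthickening_subset_open hU hSU
  set K := cthickening δ ((γ z₀) '' Icc 0 1) with hKdef
  have hK : IsCompact K := hS.cthickening
  have hfc : ContinuousOn f K := fun x hx => ((hf x (hδ hx)).continuousAt).continuousWithinAt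
  obtain ⟨M, hM⟩ := hK.exists_bound_of_continuousOn hfc
  set C : ℝ := M / (δ / 2) with hCdef
  -- every point γ z t for z near z₀, t ∈ [0,1] is deep inside K
  have hmem : ∀ z ∈ ball z₀ (δ/2), ∀ t ∈ Icc (0:ℝ) 1,
      closedBall (γ z t) (δ/2) ⊆ K ∧ γ z t ∈ U := by
    intro z hz t ht
    have hd : dist (γ z t) (γ z₀ t) ≤ δ/2 := by
      have : γ z t - γ z₀ t = (t:ℂ) • (z - z₀) := by
        simp only [hγ]; rw [smul_sub, smul_sub]; module
      rw [dist_eq_norm, this, norm_smul]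
      have h1 : ‖(t:ℂ)‖ ≤ 1 := by
        rw [Complex.norm_real, Real.norm_eq_abs, abs_of_nonneg ht.1]; exact ht.2
      have h2 : ‖z - z₀‖ ≤ δ/2 := by
        rw [← dist_eq_norm]; exact (mem_ball.1 hz).le
      calc ‖(t:ℂ)‖ * ‖z - z₀‖ ≤ 1 * (δ/2) :=
            mul_le_mul h1 h2 (norm_nonneg _) zero_le_one
        _ = δ/2 := one_mul _
    have hsub : closedBall (γ z t) (δ/2) ⊆ K := by
      intro y hy
      apply mem_cthickening_of_dist_le y (γ z₀ t) δ ((γ z₀) '' Icc 0 1) ⟨t, ht, rfl⟩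
      calc dist y (γ z₀ t) ≤ dist y (γ z t) + dist (γ z t) (γ z₀ t) := dist_triangle _ _ _
        _ ≤ δ/2 + δ/2 := add_le_add (mem_closedBall.1 hy) hd
        _ = δ := by ring
    exact ⟨hsub, hδ (hsub (mem_closedBall_self (by linarith)))⟩
  have hbound : ∀ z ∈ ball z₀ (δ/2), ∀ t ∈ Icc (0:ℝ) 1,
      ‖(t:ℂ) • fderiv ℂ f (γ z t)‖ ≤ C := by
    intro z hz t ht
    obtain ⟨hsub, _⟩ := hmem z hz t ht
    have hb := cauchy_bound hf (by linarith : (0:ℝ) < δ/2) (hsub.trans hδ)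
      (fun x hx => hM x (hsub hx))
    rw [norm_smul]
    have h1 : ‖(t:ℂ)‖ ≤ 1 := by
      rw [Complex.norm_real, Real.norm_eq_abs, abs_of_nonneg ht.1]; exact ht.2
    calc ‖(t:ℂ)‖ * ‖fderiv ℂ f (γ z t)‖ ≤ 1 * (M / (δ/2)) :=
          mul_le_mul h1 hb (norm_nonneg _) zero_le_one
      _ = C := one_mul _
  -- measurability facts
  have hγmeas : ∀ z, Measurable (γ z) := fun z => (hγcont z).measurable
  have hF'meas : AEStronglyMeasurable (fun t : ℝ => (t:ℂ) • fderiv ℂ f (γ z₀ t))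
      (volume.restrict (Set.uIoc (0:ℝ) 1)) := by
    exact (Complex.measurable_ofReal.aestronglyMeasurable).smul
      (((measurable_fderiv ℂ f).comp (hγmeas z₀)).aestronglyMeasurable)
  have hFcont : ∀ z ∈ ball z₀ (δ/2), ContinuousOn (fun t : ℝ => f (γ z t)) (Icc 0 1) := by
    intro z hz t ht
    exact ((hf _ (hmem z hz t ht).2).continuousAt.comp (hγcont z).continuousAt).continuousWithinAt
  have hz₀ball : z₀ ∈ ball z₀ (δ/2) := mem_ball_self (by linarith)
  have hFint : IntervalIntegrable (fun t : ℝ => f (γ z₀ t)) volume 0 1 :=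
    (hFcont z₀ hz₀ball).intervalIntegrable_of_Icc zero_le_one
  -- integrability of F'
  have hInt : IntervalIntegrable (fun t : ℝ => (t:ℂ) • fderiv ℂ f (γ z₀ t)) volume 0 1 := by
    apply IntervalIntegrable.mono_fun' (_root_.intervalIntegrable_const (c := C)) hF'meas
    rw [Filter.EventuallyLE, ae_restrict_iff' measurableSet_uIoc]
    apply Filter.Eventually.of_forall
    intro t ht
    have ht' : t ∈ Icc (0:ℝ) 1 := by
      rw [uIoc_of_le zero_le_one] at ht; exact ⟨ht.1.le, ht.2⟩
    exact hbound z₀ hz₀ball t ht'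
  refine ⟨hFint, ?_, ?_⟩
  · intro v
    apply IntervalIntegrable.mono_fun' (g := fun t => ‖v‖ * ‖(t:ℂ) • fderiv ℂ f (γ z₀ t)‖)
    · exact hInt.norm.const_mul _
    · apply Measurable.aestronglyMeasurable
      exact (Complex.measurable_ofReal).mul
        ((ContinuousLinearMap.measurable_apply v).comp ((measurable_fderiv ℂ f).comp (hγmeas z₀)))
    · apply Filter.Eventually.of_forall
      intro t
      show ‖(t:ℂ) * fderiv ℂ f (γ z₀ t) v‖ ≤ ‖v‖ * ‖(t:ℂ) • fderiv ℂ f (γ z₀ t)‖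
      have h : (t:ℂ) * fderiv ℂ f (γ z₀ t) v = ((t:ℂ) • fderiv ℂ f (γ z₀ t)) v := by simp
      rw [h]
      calc ‖((t:ℂ) • fderiv ℂ f (γ z₀ t)) v‖ ≤ ‖(t:ℂ) • fderiv ℂ f (γ z₀ t)‖ * ‖v‖ :=
            ContinuousLinearMap.le_opNorm _ _
        _ = ‖v‖ * ‖(t:ℂ) • fderiv ℂ f (γ z₀ t)‖ := mul_comm _ _
  · refine ⟨∫ t in (0:ℝ)..1, (t:ℂ) • fderiv ℂ f (γ z₀ t), ?_, ?_⟩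
    · intro v
      rw [ContinuousLinearMap.intervalIntegral_apply hInt]
      apply intervalIntegral.integral_congr
      intro t _
      show ((t:ℂ) • fderiv ℂ f (γ z₀ t)) v = (t:ℂ) * fderiv ℂ f (γ z₀ t) v
      rw [ContinuousLinearMap.smul_apply, smul_eq_mul]
    · apply intervalIntegral.hasFDerivAt_integral_of_dominated_of_fderiv_le
        (F := fun z t => f (γ z t)) (F' := fun z t => (t:ℂ) • fderiv ℂ f (γ z t))
        (bound := fun _ => C) (ball_mem_nhds z₀ (by linarith : (0:ℝ) < δ/2))
      · filter_upwards [ball_mem_nhds z₀ (by linarith : (0:ℝ) < δ/2)] with z hz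
        exact ((hFcont z hz).mono (by rw [uIoc_of_le zero_le_one]; exact Ioc_subset_Icc_self)
          ).aestronglyMeasurable measurableSet_uIoc
      · exact hFint
      · exact hF'meas
      · apply Filter.Eventually.of_forall
        intro t ht z hz
        have ht' : t ∈ Icc (0:ℝ) 1 := by
          rw [uIoc_of_le zero_le_one] at ht; exact ⟨ht.1.le, ht.2⟩
        exact hbound z hz t ht'
      · exact _root_.intervalIntegrable_const
      · apply Filter.Eventually.of_forall
        intro t ht z hz
        have ht' : t ∈ Icc (0:ℝ) 1 := by
          rw [uIoc_of_le zero_le_one] at ht; exact ⟨ht.1.le, ht.2⟩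
        have hinner : HasFDerivAt (fun z => γ z t)
            ((t:ℂ) • (ContinuousLinearMap.id ℂ (Fin n → ℂ))) z := by
          simp only [hγ]
          exact ((((hasFDerivAt_id z).sub_const a).const_smul ((t:ℂ))).const_add a)
        have houter : HasFDerivAt f (fderiv ℂ f (γ z t)) (γ z t) :=
          (hf _ (hmem z hz t ht').2).hasFDerivAt
        have := houter.comp z hinner
        convert this using 1
        ext v
        simp [mul_comm]
        ext v
        simp [mul_comm]


/-- Let `U ⊆ ℂⁿ` be open and star-shaped with respect to `a ∈ U`, and let
`f : U → ℂ` be holomorphic. For each `j` define `F j z = ∫ t in 0..1, f (a + t(z-a)) (z_j - a_j)`.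
Then each `F j` is complex differentiable on `U` with the stated partial derivatives. -/
theorem stmt0 (n : ℕ) (U : Set (Fin n → ℂ)) (hU : IsOpen U)
    (a : Fin n → ℂ) (ha : a ∈ U)
    (hstar : ∀ z ∈ U, ∀ t : ℝ, t ∈ Set.Icc (0 : ℝ) 1 → a + (t : ℂ) • (z - a) ∈ U)
    (f : (Fin n → ℂ) → ℂ) (hf : ∀ z ∈ U, DifferentiableAt ℂ f z)
    (F : Fin n → (Fin n → ℂ) → ℂ)
    (hF : ∀ j z, F j z = ∫ t in (0 : ℝ)..1, f (a + (t : ℂ) • (z - a)) * (z j - a j)) :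
    ∀ z ∈ U, ∀ j : Fin n,
      DifferentiableAt ℂ (F j) z ∧
      (∀ k : Fin n, k ≠ j →
        fderiv ℂ (F j) z (Pi.single k 1) =
          ∫ t in (0 : ℝ)..1,
            fderiv ℂ f (a + (t : ℂ) • (z - a)) (Pi.single k 1) * (t : ℂ) * (z j - a j)) ∧
      fderiv ℂ (F j) z (Pi.single j 1) =
        ∫ t in (0 : ℝ)..1,
          (fderiv ℂ f (a + (t : ℂ) • (z - a)) (Pi.single j 1) * (t : ℂ) * (z j - a j)
            + f (a + (t : ℂ) • (z - a))) := by
  intro z hz j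
  obtain ⟨hFint, hApInt, L, hLv, hL⟩ := key hU hstar hf z hz
  have hFeq : F j = fun w => (∫ t in (0:ℝ)..1, f (a + (t:ℂ) • (w - a))) * (w j - a j) := by
    funext w
    rw [hF]
    exact intervalIntegral.integral_mul_const _ _
  have hproj : HasFDerivAt (fun w : Fin n → ℂ => w j - a j)
      (ContinuousLinearMap.proj j : (Fin n → ℂ) →L[ℂ] ℂ) z :=
    (ContinuousLinearMap.proj (R := ℂ) (φ := fun _ : Fin n => ℂ) j).hasFDerivAt.sub_const (a j)
  have hFd : HasFDerivAt (F j)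
      ((∫ t in (0:ℝ)..1, f (a + (t:ℂ) • (z - a))) • (ContinuousLinearMap.proj j :
          (Fin n → ℂ) →L[ℂ] ℂ) + (z j - a j) • L) z := by
    rw [hFeq]
    exact hL.mul hproj
  have hfd := hFd.fderiv
  refine ⟨hFd.differentiableAt, ?_, ?_⟩
  · intro k hk
    rw [hfd]
    have hsingle : (Pi.single k (1:ℂ) : Fin n → ℂ) j = 0 := by
      rw [Pi.single_eq_of_ne (Ne.symm hk)]
    rw [ContinuousLinearMap.add_apply, ContinuousLinearMap.smul_apply,
      ContinuousLinearMap.smul_apply, ContinuousLinearMap.proj_apply, hsingle, hLv]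
    rw [smul_eq_mul, smul_eq_mul, mul_zero, zero_add, ← intervalIntegral.integral_const_mul]
    apply intervalIntegral.integral_congr
    intro t _
    ring
  · rw [hfd]
    have h1 : Set.EqOn
        (fun t : ℝ => fderiv ℂ f (a + (t:ℂ) • (z - a)) (Pi.single j 1) * (t:ℂ) * (z j - a j)
            + f (a + (t:ℂ) • (z - a)))
        (fun t : ℝ => ((t:ℂ) * fderiv ℂ f (a + (t:ℂ) • (z - a)) (Pi.single j 1)) * (z j - a j)
            + f (a + (t:ℂ) • (z - a))) (Set.uIcc 0 1) := fun t _ => by ring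
    rw [intervalIntegral.integral_congr h1,
      intervalIntegral.integral_add ((hApInt (Pi.single j 1)).mul_const _) hFint,
      intervalIntegral.integral_mul_const, ← hLv]
    rw [ContinuousLinearMap.add_apply, ContinuousLinearMap.smul_apply,
      ContinuousLinearMap.smul_apply, ContinuousLinearMap.proj_apply, Pi.single_eq_same]
    rw [smul_eq_mul, smul_eq_mul, mul_one]
    ring
end

section
/- Let U ⊆ ℂⁿ be an open set that is star-shaped with respect to a point a ∈ U, and let F = (F₁,…,Fₙ) : U → ℂⁿ be holomorphic. Then ∂F_j/∂z_k(z) = ∂F_k/∂z_j(z) for all z ∈ U and all j,k ∈ {1,…,n} if and only if there exists a holomorphic function g : U → ℂ with g(a) = 0 whose differential satisfies ∂g/∂z_j = F_j on U for every j = 1,…,n. -/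
open Metric Set intervalIntegral MeasureTheory
open scoped Interval

theorem aux_fderiv_apply {n : ℕ} {F : (Fin n → ℂ) → (Fin n → ℂ)} {z : Fin n → ℂ}
    (hF : DifferentiableAt ℂ F z) (j : Fin n) (v : Fin n → ℂ) :
    fderiv ℂ (fun w => F w j) z v = fderiv ℂ F z v j := by
  have : fderiv ℂ (fun w => F w j) z =
      (ContinuousLinearMap.proj j : (Fin n → ℂ) →L[ℂ] ℂ).comp (fderiv ℂ F z) :=
    ((ContinuousLinearMap.proj j : (Fin n → ℂ) →L[ℂ] ℂ).hasFDerivAt.comp z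
      hF.hasFDerivAt).fderiv
  rw [this]; rfl

theorem aux_sum_single {n : ℕ} (v : Fin n → ℂ) :
    v = ∑ j, v j • (Pi.single j 1 : Fin n → ℂ) := by
  have : ∀ j : Fin n, v j • (Pi.single j 1 : Fin n → ℂ) = Pi.single j (v j) := by
    intro j; ext i; by_cases h : i = j <;> simp [h, Pi.single_apply]
  simp_rw [this, Finset.univ_sum_single]

theorem aux_norm_proj {n : ℕ} (j : Fin n) :
    ‖(ContinuousLinearMap.proj j : (Fin n → ℂ) →L[ℂ] ℂ)‖ ≤ 1 :=
  ContinuousLinearMap.opNorm_le_bound _ zero_le_one fun v => by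
    simpa using norm_le_pi_norm v j


/-- A holomorphic function on an open set in ℂⁿ has `F` and `fderiv F` bounded on compacts. -/
theorem aux_bound {n : ℕ} {U : Set (Fin n → ℂ)} (hU : IsOpen U)
    {F : (Fin n → ℂ) → (Fin n → ℂ)} (hF : ∀ z ∈ U, DifferentiableAt ℂ F z)
    {K : Set (Fin n → ℂ)} (hK : IsCompact K) (hKU : K ⊆ U) :
    ∃ C : ℝ, 0 ≤ C ∧ ∀ z ∈ K, ‖F z‖ ≤ C ∧ ‖fderiv ℂ F z‖ ≤ C := by
  obtain ⟨δ, δpos, hδ⟩ := hK.exists_cthickening_subset_open hU hKU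
  have hK' : IsCompact (cthickening δ K) := hK.cthickening
  have hFc : ContinuousOn F (cthickening δ K) := fun x hx =>
    ((hF x (hδ hx)).continuousAt).continuousWithinAt
  obtain ⟨M, hM⟩ := hK'.exists_bound_of_continuousOn hFc
  set M' : ℝ := max M 0 with hM'
  have hM'0 : 0 ≤ M' := le_max_right _ _
  have hMb : ∀ x ∈ cthickening δ K, ‖F x‖ ≤ M' := fun x hx => (hM x hx).trans (le_max_left _ _)
  refine ⟨max M' (n * (M' / δ)), le_trans hM'0 (le_max_left _ _), fun z hz => ?_⟩
  have hzU : z ∈ U := hKU hz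
  have hball : closedBall z δ ⊆ cthickening δ K := closedBall_subset_cthickening hz δ
  constructor
  · exact le_trans (hMb z (hball (mem_closedBall_self δpos.le))) (le_max_left _ _)
  · refine le_trans ?_ (le_max_right _ _)
    -- bound each directional derivative by M'/δ
    have hdir : ∀ k : Fin n, ‖fderiv ℂ F z (Pi.single k 1)‖ ≤ M' / δ := by
      intro k
      set h : ℂ → (Fin n → ℂ) := fun ζ => F (z + ζ • (Pi.single k 1 : Fin n → ℂ)) with hh
      have hmem : ∀ ζ : ℂ, ζ ∈ closedBall (0:ℂ) δ →
          z + ζ • (Pi.single k 1 : Fin n → ℂ) ∈ cthickening δ K := by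
        intro ζ hζ
        apply hball
        simp only [mem_closedBall, dist_eq_norm, add_sub_cancel_left] at *
        calc ‖ζ • (Pi.single k 1 : Fin n → ℂ)‖ = ‖ζ‖ * 1 := by
              rw [norm_smul]; simp [Pi.norm_single]
          _ ≤ δ := by simpa using hζ
      have hdiff : DifferentiableOn ℂ h (closedBall (0:ℂ) δ) := by
        intro ζ hζ
        have : DifferentiableAt ℂ h ζ := by
          have h1 : DifferentiableAt ℂ (fun ζ : ℂ => z + ζ • (Pi.single k 1 : Fin n → ℂ)) ζ :=
            (differentiableAt_id.smul_const _).const_add _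
          exact (hF _ (hδ (hmem ζ hζ))).comp ζ h1
        exact this.differentiableWithinAt
      have hdc : DiffContOnCl ℂ h (ball (0:ℂ) δ) :=
        DifferentiableOn.diffContOnCl (by rwa [closure_ball (0:ℂ) δpos.ne'])
      have hsphere : ∀ ζ ∈ sphere (0:ℂ) δ, ‖h ζ‖ ≤ M' := by
        intro ζ hζ
        exact hMb _ (hmem ζ (sphere_subset_closedBall hζ))
      have hcauchy := Complex.norm_deriv_le_of_forall_mem_sphere_norm_le δpos hdc hsphere
      have hder : HasDerivAt h (fderiv ℂ F z (Pi.single k 1)) 0 := by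
        have h1 : HasDerivAt (fun ζ : ℂ => z + ζ • (Pi.single k 1 : Fin n → ℂ))
            (Pi.single k 1 : Fin n → ℂ) 0 := by
          simpa using ((hasDerivAt_id (0:ℂ)).smul_const (Pi.single k 1 : Fin n → ℂ)).const_add z
        have hz0 : HasFDerivAt F (fderiv ℂ F z) (z + (0:ℂ) • (Pi.single k 1 : Fin n → ℂ)) := by
          simpa using (hF z hzU).hasFDerivAt
        have h2 := hz0.comp_hasDerivAt 0 h1
        exact h2
      rwa [hder.deriv] at hcauchy
    refine ContinuousLinearMap.opNorm_le_bound _ (by positivity) fun v => ?_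
    have hv : v = ∑ j, v j • (Pi.single j 1 : Fin n → ℂ) := by
      have : ∀ j : Fin n, v j • (Pi.single j 1 : Fin n → ℂ) = Pi.single j (v j) := by
        intro j; ext i; by_cases h : i = j <;> simp [h, Pi.single_apply]
      simp_rw [this, Finset.univ_sum_single]
    calc ‖fderiv ℂ F z v‖ = ‖∑ j, v j • fderiv ℂ F z (Pi.single j 1)‖ := by
          conv_lhs => rw [hv]
          rw [_root_.map_sum]; simp_rw [_root_.map_smul]
      _ ≤ ∑ j, ‖v j • fderiv ℂ F z (Pi.single j 1)‖ := norm_sum_le _ _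
      _ ≤ ∑ j : Fin n, (M' / δ) * ‖v‖ := by
          refine Finset.sum_le_sum fun j _ => ?_
          rw [norm_smul]
          have h1 : ‖v j‖ ≤ ‖v‖ := norm_le_pi_norm v j
          have h2 := hdir j
          calc ‖v j‖ * ‖fderiv ℂ F z (Pi.single j 1)‖ ≤ ‖v‖ * (M' / δ) := by
                apply mul_le_mul h1 h2 (norm_nonneg _) (norm_nonneg _)
            _ = (M' / δ) * ‖v‖ := mul_comm _ _
      _ = n * (M' / δ) * ‖v‖ := by simp [Finset.sum_const, Finset.card_univ]; ring

theorem aux_rev {n : ℕ} {U : Set (Fin n → ℂ)} (hU : IsOpen U)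
    {F : (Fin n → ℂ) → (Fin n → ℂ)} (hF : ∀ z ∈ U, DifferentiableAt ℂ F z)
    {g : (Fin n → ℂ) → ℂ} (hg : ∀ z ∈ U, DifferentiableAt ℂ g z)
    (hgF : ∀ z ∈ U, ∀ j : Fin n, fderiv ℂ g z (Pi.single j 1) = F z j)
    {z : Fin n → ℂ} (hz : z ∈ U) (j k : Fin n) :
    fderiv ℂ (fun w => F w j) z (Pi.single k 1) =
      fderiv ℂ (fun w => F w k) z (Pi.single j 1) := by
  set B : Fin n → ℂ →L[ℂ] ((Fin n → ℂ) →L[ℂ] ℂ) := fun i =>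
    ContinuousLinearMap.smulRightL ℂ (Fin n → ℂ) ℂ
      (ContinuousLinearMap.proj i : (Fin n → ℂ) →L[ℂ] ℂ) with hB
  set f' : (Fin n → ℂ) → ((Fin n → ℂ) →L[ℂ] ℂ) := fderiv ℂ g with hf'
  -- on U, f' y = ∑ i, B i (F y i)
  have hrepr : ∀ y ∈ U, f' y = ∑ i, B i (F y i) := by
    intro y hy
    ext v
    have : f' y v = ∑ i, v i * f' y (Pi.single i 1) := by
      conv_lhs => rw [aux_sum_single v]
      rw [map_sum]; simp [smul_eq_mul]
    rw [this, ContinuousLinearMap.sum_apply]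
    refine Finset.sum_congr rfl fun i _ => ?_
    rw [hgF y hy i]
    rfl
  have hFi : ∀ i : Fin n, DifferentiableAt ℂ (fun w => F w i) z := by
    intro i
    exact (ContinuousLinearMap.proj i :
      (Fin n → ℂ) →L[ℂ] ℂ).differentiableAt.comp z (hF z hz)
  set f'' : (Fin n → ℂ) →L[ℂ] ((Fin n → ℂ) →L[ℂ] ℂ) :=
    ∑ i, (B i).comp (fderiv ℂ (fun w => F w i) z) with hf''
  have hf''At : HasFDerivAt f' f'' z := by
    have h1 : HasFDerivAt (fun y => ∑ i, B i (F y i)) f'' z := by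
      rw [hf'']
      apply HasFDerivAt.fun_sum
      intro i _
      exact (B i).hasFDerivAt.comp z (hFi i).hasFDerivAt
    apply h1.congr_of_eventuallyEq
    filter_upwards [hU.mem_nhds hz] with y hy using hrepr y hy
  have hev : ∀ᶠ y in nhds z, HasFDerivAt g (f' y) y := by
    filter_upwards [hU.mem_nhds hz] with y hy using (hg y hy).hasFDerivAt
  have hsymm := second_derivative_symmetric_of_eventually hev hf''At
    (Pi.single k 1) (Pi.single j 1)
  have heval : ∀ p q : Fin n, f'' (Pi.single q 1) (Pi.single p 1) =
      fderiv ℂ (fun w => F w p) z (Pi.single q 1) := by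
    intro p q
    rw [hf'', ContinuousLinearMap.sum_apply, ContinuousLinearMap.sum_apply]
    have hterm : ∀ i : Fin n,
        ((((B i).comp (fderiv ℂ (fun w => F w i) z)) (Pi.single q 1)) (Pi.single p 1)) =
          (Pi.single p 1 : Fin n → ℂ) i * fderiv ℂ (fun w => F w i) z (Pi.single q 1) := fun i => rfl
    simp_rw [hterm]
    rw [Finset.sum_eq_single p]
    · simp
    · intro b _ hb; simp [Pi.single_apply, hb]
    · intro habs; exact absurd (Finset.mem_univ p) habs
  rw [← heval j k, ← heval k j]
  exact hsymm

set_option maxHeartbeats 1000000 in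
theorem aux_fwd {n : ℕ} {U : Set (Fin n → ℂ)} (hU : IsOpen U)
    {a : Fin n → ℂ} (ha : a ∈ U)
    (hstar : ∀ z ∈ U, ∀ t : ℝ, t ∈ Set.Icc (0 : ℝ) 1 → a + (t : ℂ) • (z - a) ∈ U)
    {F : (Fin n → ℂ) → (Fin n → ℂ)} (hF : ∀ z ∈ U, DifferentiableAt ℂ F z)
    (h : ∀ z ∈ U, ∀ j k : Fin n,
        fderiv ℂ (fun w => F w j) z (Pi.single k 1) =
          fderiv ℂ (fun w => F w k) z (Pi.single j 1)) :
    ∃ g : (Fin n → ℂ) → ℂ,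
        (∀ z ∈ U, DifferentiableAt ℂ g z) ∧ g a = 0 ∧
        ∀ z ∈ U, ∀ j : Fin n, fderiv ℂ g z (Pi.single j 1) = F z j := by
  classical
  set Φ : (Fin n → ℂ) → ℝ → (Fin n → ℂ) := fun x t => a + (t : ℂ) • (x - a) with hΦdef
  set G : (Fin n → ℂ) → ℝ → ℂ := fun x t => ∑ j, F (Φ x t) j * (x j - a j) with hGdef
  set g : (Fin n → ℂ) → ℂ := fun x => ∫ t in (0:ℝ)..1, G x t with hgdef
  set A : (Fin n → ℂ) → ℝ → Fin n → ((Fin n → ℂ) →L[ℂ] ℂ) := fun x t j =>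
    F (Φ x t) j • (ContinuousLinearMap.proj j : (Fin n → ℂ) →L[ℂ] ℂ) +
      (x j - a j) • ((ContinuousLinearMap.proj j : (Fin n → ℂ) →L[ℂ] ℂ).comp
        ((t : ℂ) • fderiv ℂ F (Φ x t))) with hAdef
  set G' : (Fin n → ℂ) → ℝ → ((Fin n → ℂ) →L[ℂ] ℂ) := fun x t => ∑ j, A x t j with hG'def
  -- pointwise differentiability in x
  have hA : ∀ (t : ℝ) (x : Fin n → ℂ), Φ x t ∈ U →
      HasFDerivAt (fun y => G y t) (G' x t) x := by
    intro t x hx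
    have : HasFDerivAt (fun y => ∑ j, F (Φ y t) j * (y j - a j)) (∑ j, A x t j) x := by
      apply HasFDerivAt.fun_sum
      intro j _
      have hΦ : HasFDerivAt (fun y => Φ y t)
          ((t : ℂ) • ContinuousLinearMap.id ℂ (Fin n → ℂ)) x := by
        have h1 : HasFDerivAt (fun y : Fin n → ℂ => y - a)
            (ContinuousLinearMap.id ℂ (Fin n → ℂ)) x := (hasFDerivAt_id x).sub_const a
        exact (h1.const_smul ((t : ℂ))).const_add a
      have hFc : HasFDerivAt F (fderiv ℂ F (Φ x t)) (Φ x t) := (hF _ hx).hasFDerivAt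
      have hcomp := hFc.comp x hΦ
      have hcomp' : HasFDerivAt (fun y => F (Φ y t)) ((t : ℂ) • fderiv ℂ F (Φ x t)) x := by
        refine hcomp.congr_fderiv ?_
        ext v i
        simp
      have hc : HasFDerivAt (fun y => F (Φ y t) j)
          ((ContinuousLinearMap.proj j : (Fin n → ℂ) →L[ℂ] ℂ).comp
            ((t : ℂ) • fderiv ℂ F (Φ x t))) x :=
        (ContinuousLinearMap.proj j : (Fin n → ℂ) →L[ℂ] ℂ).hasFDerivAt.comp x hcomp'
      have hd : HasFDerivAt (fun y : Fin n → ℂ => y j - a j)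
          (ContinuousLinearMap.proj j : (Fin n → ℂ) →L[ℂ] ℂ) x :=
        (ContinuousLinearMap.proj j : (Fin n → ℂ) →L[ℂ] ℂ).hasFDerivAt.sub_const (a j)
      exact hc.mul hd
    exact this
  -- main derivative claim
  have key : ∀ z₀ ∈ U, HasFDerivAt g (∫ t in (0:ℝ)..1, G' z₀ t) z₀ ∧
      IntervalIntegrable (G' z₀) volume 0 1 := by
    intro z₀ hz₀
    obtain ⟨r, rpos, hr⟩ := Metric.isOpen_iff.mp hU z₀ hz₀
    set ε : ℝ := r / 2 with hε
    have εpos : 0 < ε := by positivity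
    have hcbU : closedBall z₀ ε ⊆ U := fun x hx =>
      hr (lt_of_le_of_lt (mem_closedBall.mp hx) (by simp [hε]; linarith))
    have hΦU : ∀ x ∈ closedBall z₀ ε, ∀ t ∈ Icc (0:ℝ) 1, Φ x t ∈ U := fun x hx t ht =>
      hstar x (hcbU hx) t ht
    set K : Set (Fin n → ℂ) :=
      (fun p : (Fin n → ℂ) × ℝ => Φ p.1 p.2) '' (closedBall z₀ ε ×ˢ Icc (0:ℝ) 1) with hK
    have hKc : IsCompact K := by
      apply ((isCompact_closedBall z₀ ε).prod isCompact_Icc).image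
      apply Continuous.add continuous_const
      exact (Complex.continuous_ofReal.comp continuous_snd).smul
        ((continuous_fst).sub continuous_const)
    have hKU : K ⊆ U := by
      rintro _ ⟨⟨x, t⟩, ⟨hx, ht⟩, rfl⟩
      exact hΦU x hx t ht
    obtain ⟨C, hC0, hC⟩ := aux_bound hU hF hKc hKU
    have hmemK : ∀ x ∈ closedBall z₀ ε, ∀ t ∈ Icc (0:ℝ) 1, Φ x t ∈ K := by
      intro x hx t ht
      exact ⟨(x, t), ⟨hx, ht⟩, rfl⟩
    set R : ℝ := ‖z₀ - a‖ + ε with hR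
    set Cb : ℝ := n * (C + R * C) with hCb
    -- the uniform bound
    have h_bound : ∀ t ∈ Ι (0:ℝ) 1, ∀ x ∈ ball z₀ ε, ‖G' x t‖ ≤ Cb := by
      intro t ht x hx
      rw [uIoc_of_le zero_le_one] at ht
      have ht' : t ∈ Icc (0:ℝ) 1 := Ioc_subset_Icc_self ht
      have hx' : x ∈ closedBall z₀ ε := ball_subset_closedBall hx
      have hΦK : Φ x t ∈ K := hmemK x hx' t ht'
      have hFb := (hC _ hΦK).1
      have hDb := (hC _ hΦK).2
      have hxa : ‖x - a‖ ≤ R := by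
        calc ‖x - a‖ = ‖(x - z₀) + (z₀ - a)‖ := by ring_nf
          _ ≤ ‖x - z₀‖ + ‖z₀ - a‖ := norm_add_le _ _
          _ ≤ ε + ‖z₀ - a‖ := by
              have := mem_ball_iff_norm.mp hx
              linarith
          _ = R := by rw [hR]; ring
      calc ‖G' x t‖ ≤ ∑ j : Fin n, ‖A x t j‖ := norm_sum_le _ _
        _ ≤ ∑ j : Fin n, (C + R * C) := by
            refine Finset.sum_le_sum fun j _ => ?_
            refine (norm_add_le _ _).trans ?_
            have e1 : ‖F (Φ x t) j • (ContinuousLinearMap.proj j :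
                (Fin n → ℂ) →L[ℂ] ℂ)‖ ≤ C := by
              refine (norm_smul_le (F (Φ x t) j)
                ((ContinuousLinearMap.proj j : (Fin n → ℂ) →L[ℂ] ℂ))).trans ?_
              calc ‖F (Φ x t) j‖ * ‖(ContinuousLinearMap.proj j :
                  (Fin n → ℂ) →L[ℂ] ℂ)‖ ≤ C * 1 :=
                  mul_le_mul ((norm_le_pi_norm _ j).trans hFb) (aux_norm_proj j)
                    (norm_nonneg _) hC0
                _ = C := mul_one C
            have e2 : ‖(x j - a j) • ((ContinuousLinearMap.proj j :
                (Fin n → ℂ) →L[ℂ] ℂ).comp ((t : ℂ) • fderiv ℂ F (Φ x t)))‖ ≤ R * C := by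
              refine (norm_smul_le (x j - a j) ((ContinuousLinearMap.proj j :
                (Fin n → ℂ) →L[ℂ] ℂ).comp ((t : ℂ) • fderiv ℂ F (Φ x t)))).trans ?_
              have h1 : ‖x j - a j‖ ≤ R := by
                have := norm_le_pi_norm (x - a) j
                simpa using this.trans hxa
              have h2 : ‖(ContinuousLinearMap.proj j :
                  (Fin n → ℂ) →L[ℂ] ℂ).comp ((t : ℂ) • fderiv ℂ F (Φ x t))‖ ≤ C := by
                refine (ContinuousLinearMap.opNorm_comp_le _ _).trans ?_
                calc ‖(ContinuousLinearMap.proj j : (Fin n → ℂ) →L[ℂ] ℂ)‖ *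
                    ‖(t : ℂ) • fderiv ℂ F (Φ x t)‖ ≤ 1 * (1 * C) := by
                      apply mul_le_mul (aux_norm_proj j) ?_ (norm_nonneg _) zero_le_one
                      refine (norm_smul_le ((t:ℝ) : ℂ) (fderiv ℂ F (Φ x t))).trans ?_
                      apply mul_le_mul ?_ hDb (norm_nonneg _) zero_le_one
                      simp only [Complex.norm_real]
                      rw [Real.norm_eq_abs, abs_of_nonneg ht'.1]
                      exact ht'.2
                  _ = C := by ring
              exact mul_le_mul h1 h2 (norm_nonneg _) (le_trans (norm_nonneg _) h1)
            linarith
        _ = Cb := by simp [hCb, Finset.sum_const, Finset.card_univ]; ring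
    -- measurability of G' z₀
    have hΦcont : Continuous (fun t => Φ z₀ t) :=
      continuous_const.add (Complex.continuous_ofReal.smul continuous_const)
    have hF'meas : AEStronglyMeasurable (G' z₀) (volume.restrict (Ι (0:ℝ) 1)) := by
      apply Finset.aestronglyMeasurable_fun_sum
      intro j _
      apply AEStronglyMeasurable.add
      · -- continuousOn part
        have hcont : ContinuousOn (fun t => F (Φ z₀ t) j •
            (ContinuousLinearMap.proj j : (Fin n → ℂ) →L[ℂ] ℂ)) (Ι (0:ℝ) 1) := by
          apply continuousOn_of_forall_continuousAt
          intro t ht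
          rw [uIoc_of_le zero_le_one] at ht
          have hmem : Φ z₀ t ∈ U :=
            hΦU z₀ (mem_closedBall_self εpos.le) t (Ioc_subset_Icc_self ht)
          have c1 : ContinuousAt (fun s : ℝ => F (Φ z₀ s)) t :=
            (hF _ hmem).continuousAt.comp hΦcont.continuousAt
          have c2 : ContinuousAt (fun s : ℝ => F (Φ z₀ s) j) t :=
            ((continuous_apply j).continuousAt).comp c1
          exact c2.smul continuousAt_const
        exact hcont.aestronglyMeasurable measurableSet_uIoc
      · -- measurable part
        have m1 : Measurable (fun t => fderiv ℂ F (Φ z₀ t)) :=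
          (measurable_fderiv ℂ F).comp hΦcont.measurable
        have m2 : Measurable (fun t : ℝ => (t : ℂ) • fderiv ℂ F (Φ z₀ t)) := by
          have hsc : Continuous (fun p : ℂ × ((Fin n → ℂ) →L[ℂ] (Fin n → ℂ)) => p.1 • p.2) :=
            continuous_smul
          exact hsc.measurable.comp (Complex.measurable_ofReal.prodMk m1)
        have m3 : Measurable (fun t : ℝ => (ContinuousLinearMap.proj j :
            (Fin n → ℂ) →L[ℂ] ℂ).comp ((t : ℂ) • fderiv ℂ F (Φ z₀ t))) := by
          have hcl : Continuous (fun L : (Fin n → ℂ) →L[ℂ] (Fin n → ℂ) =>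
              (ContinuousLinearMap.proj j : (Fin n → ℂ) →L[ℂ] ℂ).comp L) :=
            (ContinuousLinearMap.compL ℂ (Fin n → ℂ) (Fin n → ℂ) ℂ
              (ContinuousLinearMap.proj j)).continuous
          exact hcl.measurable.comp m2
        exact (m3.const_smul (z₀ j - a j)).aestronglyMeasurable
    -- measurability of G x for x near z₀
    have hGcont : ∀ x ∈ closedBall z₀ ε, ∀ t ∈ Icc (0:ℝ) 1, ContinuousAt (G x) t := by
      intro x hx t ht
      have hmem : Φ x t ∈ U := hΦU x hx t ht
      apply tendsto_finset_sum
      intro j _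
      have hΦc : Continuous (fun t => Φ x t) :=
        continuous_const.add (Complex.continuous_ofReal.smul continuous_const)
      have c1 : ContinuousAt (fun s : ℝ => F (Φ x s)) t :=
        (hF _ hmem).continuousAt.comp hΦc.continuousAt
      have c2 : ContinuousAt (fun s : ℝ => F (Φ x s) j) t :=
        ((continuous_apply j).continuousAt).comp c1
      exact c2.mul continuousAt_const
    have hF_meas : ∀ᶠ x in nhds z₀, AEStronglyMeasurable (G x)
        (volume.restrict (Ι (0:ℝ) 1)) := by
      filter_upwards [Metric.closedBall_mem_nhds z₀ εpos] with x hx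
      apply ContinuousOn.aestronglyMeasurable ?_ measurableSet_uIoc
      apply continuousOn_of_forall_continuousAt
      intro t ht
      rw [uIoc_of_le zero_le_one] at ht
      exact hGcont x hx t (Ioc_subset_Icc_self ht)
    have hF_int : IntervalIntegrable (G z₀) volume 0 1 := by
      apply ContinuousOn.intervalIntegrable
      apply continuousOn_of_forall_continuousAt
      intro t ht
      rw [uIcc_of_le zero_le_one] at ht
      exact hGcont z₀ (mem_closedBall_self εpos.le) t ht
    have h_diff : ∀ᵐ t ∂(volume : Measure ℝ), t ∈ Ι (0:ℝ) 1 →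
        ∀ x ∈ ball z₀ ε, HasFDerivAt (fun y => G y t) (G' x t) x := by
      filter_upwards with t ht x hx
      rw [uIoc_of_le zero_le_one] at ht
      exact hA t x (hΦU x (ball_subset_closedBall hx) t (Ioc_subset_Icc_self ht))
    have h_bound' : ∀ᵐ t ∂(volume : Measure ℝ), t ∈ Ι (0:ℝ) 1 →
        ∀ x ∈ ball z₀ ε, ‖G' x t‖ ≤ Cb := by
      filter_upwards with t ht x hx
      exact h_bound t ht x hx
    have hmain := intervalIntegral.hasFDerivAt_integral_of_dominated_of_fderiv_le
      (ball_mem_nhds z₀ εpos) hF_meas hF_int hF'meas h_bound' intervalIntegrable_const h_diff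
    refine ⟨hmain, ?_⟩
    rw [intervalIntegrable_iff]
    haveI : IsFiniteMeasure ((volume : Measure ℝ).restrict (Ι (0:ℝ) 1)) := by
      constructor
      rw [Measure.restrict_apply_univ, uIoc_of_le (zero_le_one (α := ℝ)), Real.volume_Ioc]
      exact ENNReal.ofReal_lt_top
    apply Integrable.mono' (integrable_const Cb) hF'meas
    filter_upwards [ae_restrict_mem measurableSet_uIoc] with t ht
    exact h_bound t ht z₀ (mem_ball_self εpos)
  -- conclude
  refine ⟨g, fun z hz => ((key z hz).1).differentiableAt, ?_, ?_⟩
  · have : ∀ t : ℝ, G a t = 0 := by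
      intro t
      simp [hGdef]
    simp only [hgdef, this, intervalIntegral.integral_zero]
  · intro z₀ hz₀ k
    obtain ⟨hg', hInt⟩ := key z₀ hz₀
    rw [hg'.fderiv]
    rw [ContinuousLinearMap.intervalIntegral_apply hInt (Pi.single k 1)]
    -- FTC
    set φ : ℝ → ℂ := fun t => (t : ℂ) * F (Φ z₀ t) k with hφdef
    have hderivφ : ∀ t ∈ uIcc (0:ℝ) 1, HasDerivAt φ (G' z₀ t (Pi.single k 1)) t := by
      intro t ht
      rw [uIcc_of_le zero_le_one] at ht
      have hmem : Φ z₀ t ∈ U := hstar z₀ hz₀ t ht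
      have h1 : HasDerivAt (fun s : ℝ => (s : ℂ)) 1 t := by
        have := Complex.ofRealCLM.hasDerivAt (x := t)
        rw [Complex.ofRealCLM_apply, Complex.ofReal_one] at this
        exact this
      have hΦd : HasDerivAt (fun s : ℝ => Φ z₀ s) (z₀ - a) t := by
        have h2 := h1.smul_const (z₀ - a)
        have h3 := h2.const_add a
        rw [one_smul] at h3
        exact h3
      have hFd : HasDerivAt (fun s : ℝ => F (Φ z₀ s)) (fderiv ℂ F (Φ z₀ t) (z₀ - a)) t :=
        ((hF _ hmem).hasFDerivAt.restrictScalars ℝ).comp_hasDerivAt t hΦd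
      have hFk : HasDerivAt (fun s : ℝ => F (Φ z₀ s) k)
          ((fderiv ℂ F (Φ z₀ t) (z₀ - a)) k) t :=
        (ContinuousLinearMap.proj k : (Fin n → ℂ) →L[ℝ] ℂ).hasFDerivAt.comp_hasDerivAt t hFd
      have hmul := h1.mul hFk
      have heq : G' z₀ t (Pi.single k 1) =
          1 * F (Φ z₀ t) k + (t : ℂ) * (fderiv ℂ F (Φ z₀ t) (z₀ - a)) k := by
        have expand : G' z₀ t (Pi.single k 1) = (∑ j, F (Φ z₀ t) j * (Pi.single k 1 : Fin n → ℂ) j)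
            + ∑ j, (z₀ j - a j) * ((t : ℂ) * (fderiv ℂ F (Φ z₀ t) (Pi.single k 1)) j) := by
          rw [hG'def]
          simp only [ContinuousLinearMap.sum_apply]
          rw [← Finset.sum_add_distrib]
          refine Finset.sum_congr rfl fun j _ => ?_
          rw [hAdef]
          simp only [ContinuousLinearMap.add_apply, ContinuousLinearMap.smul_apply,
            ContinuousLinearMap.coe_comp', Function.comp_apply,
            ContinuousLinearMap.proj_apply, Pi.smul_apply, smul_eq_mul]
        rw [expand]
        have s1 : (∑ j, F (Φ z₀ t) j * (Pi.single k 1 : Fin n → ℂ) j) = F (Φ z₀ t) k := by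
          rw [Finset.sum_eq_single k]
          · simp
          · intro b _ hb; simp [Pi.single_apply, hb]
          · intro habs; exact absurd (Finset.mem_univ k) habs
        have s2 : ∑ j, (z₀ j - a j) * ((t : ℂ) * (fderiv ℂ F (Φ z₀ t) (Pi.single k 1)) j) =
            (t : ℂ) * (fderiv ℂ F (Φ z₀ t) (z₀ - a)) k := by
          have hsym : ∀ j : Fin n, (fderiv ℂ F (Φ z₀ t) (Pi.single k 1)) j =
              (fderiv ℂ F (Φ z₀ t) (Pi.single j 1)) k := by
            intro j
            rw [← aux_fderiv_apply (hF _ hmem) j, ← aux_fderiv_apply (hF _ hmem) k]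
            exact h _ hmem j k
          simp_rw [hsym]
          have : (fderiv ℂ F (Φ z₀ t) (z₀ - a)) k =
              ∑ j, (z₀ j - a j) * (fderiv ℂ F (Φ z₀ t) (Pi.single j 1)) k := by
            conv_lhs => rw [aux_sum_single (z₀ - a)]
            rw [_root_.map_sum]
            simp only [Finset.sum_apply, Pi.sub_apply]
            refine Finset.sum_congr rfl fun j _ => ?_
            rw [_root_.map_smul]
            simp [smul_eq_mul]
          rw [this, Finset.mul_sum]
          refine Finset.sum_congr rfl fun j _ => ?_
          ring
        rw [s1, s2]
        ring
      rw [heq]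
      exact hmul
    have hIντ : IntervalIntegrable (fun t => G' z₀ t (Pi.single k 1)) volume 0 1 := by
      rw [intervalIntegrable_iff] at hInt ⊢
      exact (ContinuousLinearMap.apply ℂ ℂ (Pi.single k 1 : Fin n → ℂ)).integrable_comp hInt
    have hFTC := intervalIntegral.integral_eq_sub_of_hasDerivAt hderivφ hIντ
    rw [hFTC]
    simp [hφdef, hΦdef]


/-- complex Poincaré lemma on star-shaped domains. Let `U ⊆ ℂⁿ` be open and
star-shaped with respect to `a ∈ U`, and let `F : U → ℂⁿ` be holomorphic. Then
`∂F_j/∂z_k = ∂F_k/∂z_j` on `U` for all `j, k` iff there is a holomorphic `g : U → ℂ` with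
`g a = 0` and `dg = F` on `U`. -/
theorem stmt1 (n : ℕ) (U : Set (Fin n → ℂ)) (hU : IsOpen U)
    (a : Fin n → ℂ) (ha : a ∈ U)
    (hstar : ∀ z ∈ U, ∀ t : ℝ, t ∈ Set.Icc (0 : ℝ) 1 → a + (t : ℂ) • (z - a) ∈ U)
    (F : (Fin n → ℂ) → (Fin n → ℂ)) (hF : ∀ z ∈ U, DifferentiableAt ℂ F z) :
    (∀ z ∈ U, ∀ j k : Fin n,
        fderiv ℂ (fun w => F w j) z (Pi.single k 1) =
          fderiv ℂ (fun w => F w k) z (Pi.single j 1)) ↔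
    (∃ g : (Fin n → ℂ) → ℂ,
        (∀ z ∈ U, DifferentiableAt ℂ g z) ∧ g a = 0 ∧
        ∀ z ∈ U, ∀ j : Fin n, fderiv ℂ g z (Pi.single j 1) = F z j) := by
  constructor
  · intro h
    exact aux_fwd hU ha hstar hF h
  · rintro ⟨g, hg, hga, hgF⟩ z hz j k
    exact aux_rev hU hF hg hgF hz j k
end

section
/- Let B be the open bidisk, i.e. the open unit ball of ℂ² with the sup norm. Let g, h : 𝔻 → ℂ be bounded holomorphic functions on the open unit disk 𝔻 such that the derivative g′ is unbounded on 𝔻, and define F₁ : B → ℂ by F₁(z₁, z₂) = h(z₁) + g(z₂). Then F₁ is bounded and holomorphic on B, but there exists no bounded holomorphic function F₂ : B → ℂ satisfying ∂F₂/∂z₁(z₁,z₂) = ∂F₁/∂z₂(z₁,z₂) for all (z₁,z₂) ∈ B. -/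
/-- Let `B` be the open bidisk (unit ball of `ℂ²` with the sup norm, here
`ℂ × ℂ` with its max norm).  If `g, h ∈ 𝓗^∞(𝔻)` with `g'` unbounded on `𝔻`, and
`F₁(z₁,z₂) = h z₁ + g z₂`, then `F₁` is bounded and holomorphic on `B`, but there is no
bounded holomorphic `F₂ : ℂ × ℂ → ℂ` with `∂F₂/∂z₁ = ∂F₁/∂z₂` on `B`. -/
theorem stmt3 (g h : ℂ → ℂ)
    (hg : DifferentiableOn ℂ g (Metric.ball (0 : ℂ) 1))
    (hgb : ∃ C : ℝ, ∀ z ∈ Metric.ball (0 : ℂ) 1, ‖g z‖ ≤ C)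
    (hh : DifferentiableOn ℂ h (Metric.ball (0 : ℂ) 1))
    (hhb : ∃ C : ℝ, ∀ z ∈ Metric.ball (0 : ℂ) 1, ‖h z‖ ≤ C)
    (hg' : ¬ ∃ C : ℝ, ∀ z ∈ Metric.ball (0 : ℂ) 1, ‖deriv g z‖ ≤ C)
    (F₁ : ℂ × ℂ → ℂ) (hF₁ : ∀ p : ℂ × ℂ, F₁ p = h p.1 + g p.2) :
    (DifferentiableOn ℂ F₁ (Metric.ball (0 : ℂ × ℂ) 1) ∧
      ∃ C : ℝ, ∀ p ∈ Metric.ball (0 : ℂ × ℂ) 1, ‖F₁ p‖ ≤ C) ∧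
    ¬ ∃ F₂ : ℂ × ℂ → ℂ,
        DifferentiableOn ℂ F₂ (Metric.ball (0 : ℂ × ℂ) 1) ∧
        (∃ C : ℝ, ∀ p ∈ Metric.ball (0 : ℂ × ℂ) 1, ‖F₂ p‖ ≤ C) ∧
        ∀ p ∈ Metric.ball (0 : ℂ × ℂ) 1,
          fderiv ℂ F₂ p (1, 0) = fderiv ℂ F₁ p (0, 1) := by
  have hFeq : F₁ = fun p : ℂ × ℂ => h p.1 + g p.2 := funext hF₁
  have hmem : ∀ p : ℂ × ℂ, p ∈ Metric.ball (0 : ℂ × ℂ) 1 →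
      p.1 ∈ Metric.ball (0 : ℂ) 1 ∧ p.2 ∈ Metric.ball (0 : ℂ) 1 := by
    intro p hp
    rw [mem_ball_zero_iff, Prod.norm_def] at hp
    constructor <;> rw [mem_ball_zero_iff]
    · exact lt_of_le_of_lt (le_max_left _ _) hp
    · exact lt_of_le_of_lt (le_max_right _ _) hp
  have hdiff : DifferentiableOn ℂ F₁ (Metric.ball (0 : ℂ × ℂ) 1) := by
    rw [hFeq]
    exact (hh.comp differentiableOn_fst fun p hp => (hmem p hp).1).add
      (hg.comp differentiableOn_snd fun p hp => (hmem p hp).2)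
  refine ⟨⟨hdiff, ?_⟩, ?_⟩
  · obtain ⟨Ch, hCh⟩ := hhb
    obtain ⟨Cg, hCg⟩ := hgb
    refine ⟨Ch + Cg, fun p hp => ?_⟩
    rw [hF₁]
    exact (norm_add_le _ _).trans
      (add_le_add (hCh _ (hmem p hp).1) (hCg _ (hmem p hp).2))
  · rintro ⟨F₂, hF₂d, ⟨C, hC⟩, hF₂'⟩
    -- compute ∂F₁/∂z₂
    have hfd1 : ∀ p ∈ Metric.ball (0 : ℂ × ℂ) 1,
        fderiv ℂ F₁ p (0, 1) = deriv g p.2 := by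
      intro p hp
      have h1 : HasFDerivAt (fun q : ℂ × ℂ => h q.1)
          ((fderiv ℂ h p.1).comp (ContinuousLinearMap.fst ℂ ℂ ℂ)) p :=
        ((hh.differentiableAt (Metric.isOpen_ball.mem_nhds (hmem p hp).1)).hasFDerivAt).comp p
          hasFDerivAt_fst
      have h2 : HasFDerivAt (fun q : ℂ × ℂ => g q.2)
          ((fderiv ℂ g p.2).comp (ContinuousLinearMap.snd ℂ ℂ ℂ)) p :=
        ((hg.differentiableAt (Metric.isOpen_ball.mem_nhds (hmem p hp).2)).hasFDerivAt).comp p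
          hasFDerivAt_snd
      have h3 : HasFDerivAt (fun q : ℂ × ℂ => h q.1 + g q.2) _ p := h1.add h2
      rw [← hFeq] at h3
      rw [h3.fderiv]
      simp [fderiv_apply_one_eq_deriv]
    -- key bound on deriv g
    apply hg'
    refine ⟨2 * C + 2 * C, fun z₂ hz₂ => ?_⟩
    set c : ℂ := deriv g z₂ with hc
    have hline : ∀ z ∈ Metric.ball (0 : ℂ) 1, (z, z₂) ∈ Metric.ball (0 : ℂ × ℂ) 1 := by
      intro z hz
      rw [mem_ball_zero_iff] at hz hz₂ ⊢
      rw [Prod.norm_def]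
      exact max_lt hz hz₂
    have hψ : ∀ z ∈ Metric.ball (0 : ℂ) 1,
        HasDerivWithinAt (fun z : ℂ => F₂ (z, z₂) - c * z) 0 (Metric.ball (0 : ℂ) 1) z := by
      intro z hz
      have hmk : HasFDerivAt (fun z : ℂ => (z, z₂)) (ContinuousLinearMap.inl ℂ ℂ ℂ) z :=
        hasFDerivAt_prodMk_left z z₂
      have hF2 : HasFDerivAt F₂ (fderiv ℂ F₂ (z, z₂)) (z, z₂) :=
        (hF₂d.differentiableAt (Metric.isOpen_ball.mem_nhds (hline z hz))).hasFDerivAt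
      have hcomp : HasDerivAt (fun z : ℂ => F₂ (z, z₂))
          (((fderiv ℂ F₂ (z, z₂)).comp (ContinuousLinearMap.inl ℂ ℂ ℂ)) 1) z :=
        (hF2.comp z hmk).hasDerivAt
      have : ((fderiv ℂ F₂ (z, z₂)).comp (ContinuousLinearMap.inl ℂ ℂ ℂ)) 1 = c := by
        simp only [ContinuousLinearMap.comp_apply, ContinuousLinearMap.inl_apply]
        rw [hF₂' (z, z₂) (hline z hz), hfd1 (z, z₂) (hline z hz)]
      rw [this] at hcomp
      have hlin : HasDerivAt (fun z : ℂ => c * z) c z := by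
        simpa using (hasDerivAt_id z).const_mul c
      have hsub := (hcomp.sub hlin).hasDerivWithinAt (s := Metric.ball (0 : ℂ) 1)
      rw [sub_self] at hsub
      exact hsub
    have h0 : (0 : ℂ) ∈ Metric.ball (0 : ℂ) 1 := by simp
    have hhalf : (1 / 2 : ℂ) ∈ Metric.ball (0 : ℂ) 1 := by
      rw [mem_ball_zero_iff]; norm_num
    have hmvt := (convex_ball (0 : ℂ) 1).norm_image_sub_le_of_norm_hasDerivWithin_le (C := 0)
      hψ (fun z _ => by simp) h0 hhalf
    rw [zero_mul] at hmvt
    have heq : F₂ (1 / 2, z₂) - c * (1 / 2) - (F₂ (0, z₂) - c * 0) = 0 := by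
      exact norm_le_zero_iff.mp hmvt
    have hc2 : c = 2 * (F₂ (1 / 2, z₂) - F₂ (0, z₂)) := by
      linear_combination -2 * heq
    calc ‖c‖ = 2 * ‖F₂ (1 / 2, z₂) - F₂ (0, z₂)‖ := by
          rw [hc2, norm_mul]; norm_num
      _ ≤ 2 * (‖F₂ (1 / 2, z₂)‖ + ‖F₂ (0, z₂)‖) := by
          have := norm_sub_le (F₂ (1 / 2, z₂)) (F₂ (0, z₂)); linarith
      _ ≤ 2 * C + 2 * C := by
          have h1 := hC _ (hline _ hhalf)
          have h2 := hC _ (hline _ h0)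
          linarith
end

section
/- Let X be a complex Banach space, m ≥ 2, and Q ∈ 𝓟(^{m−1}X, X*). Then Q = dP for some P ∈ 𝓟(^m X) if and only if y∘d(x∘Q) = x∘d(y∘Q) as elements of 𝓟(^{m−2}X), for all x, y ∈ X. -/
open Fin Function

namespace Stmt5Aux

variable {X : Type*} [NormedAddCommGroup X] [NormedSpace ℂ X]
variable {F : Type*} [NormedAddCommGroup F] [NormedSpace ℂ F]

lemma hasFDerivAt_diag {n : ℕ} (S : ContinuousMultilinearMap ℂ (fun _ : Fin n => X) F) (u : X) :
    HasFDerivAt (fun v : X => S fun _ => v)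
      ((S.linearDeriv fun _ => u).comp
        (ContinuousLinearMap.pi fun _ : Fin n => ContinuousLinearMap.id ℂ X)) u := by
  have h2 : HasFDerivAt (fun v : X => (fun _ : Fin n => v))
      (ContinuousLinearMap.pi fun _ : Fin n => ContinuousLinearMap.id ℂ X) u :=
    (ContinuousLinearMap.pi fun _ : Fin n => ContinuousLinearMap.id ℂ X).hasFDerivAt
  exact (S.hasFDerivAt (fun _ => u)).comp u h2

lemma fderiv_diag {n : ℕ} (S : ContinuousMultilinearMap ℂ (fun _ : Fin n => X) F) (u x : X) :
    fderiv ℂ (fun v : X => S fun _ => v) u x = ∑ i, S (update (fun _ => u) i x) := by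
  rw [(hasFDerivAt_diag S u).fderiv]
  simp [ContinuousMultilinearMap.linearDeriv_apply]

lemma update_const_comp_swap {n : ℕ} (u x : X) (i j : Fin n) :
    (update (fun _ : Fin n => u) j x) ∘ (Equiv.swap i j) = update (fun _ => u) i x := by
  funext l
  simp only [comp_apply, Equiv.swap_apply_def, update_apply]
  split_ifs <;> simp_all

lemma update_last_eq_snoc {n : ℕ} (u x : X) :
    update (fun _ : Fin (n+1) => u) (last n) x = snoc (fun _ : Fin n => u) x := by
  funext j
  induction j using Fin.lastCases with
  | last => simp
  | cast i => simp [Function.update_of_ne (Fin.castSucc_lt_last i).ne]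

lemma sum_update_eq {n : ℕ} (S : ContinuousMultilinearMap ℂ (fun _ : Fin (n+1) => X) F)
    (hS : ∀ (σ : Equiv.Perm (Fin (n+1))) (v : Fin (n+1) → X), S (v ∘ σ) = S v) (u x : X) :
    ∑ i, S (update (fun _ => u) i x) = ((n+1 : ℕ) : ℂ) • S (snoc (fun _ : Fin n => u) x) := by
  have key : ∀ i : Fin (n+1), S (update (fun _ : Fin (n+1) => u) i x)
      = S (snoc (fun _ : Fin n => u) x) := by
    intro i
    rw [← update_last_eq_snoc u x, ← update_const_comp_swap u x i (last n), hS]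
  rw [Finset.sum_congr rfl fun i _ => key i, Finset.sum_const, Finset.card_univ,
    Fintype.card_fin]
  exact (Nat.cast_smul_eq_nsmul ℂ _ _).symm

/-- Extend a permutation of `Fin n` to a permutation of `Fin (n+1)` fixing `last n`. -/
def permExt {n : ℕ} (σ : Equiv.Perm (Fin n)) : Equiv.Perm (Fin (n+1)) where
  toFun := fun j => Fin.lastCases (last n) (fun i => (σ i).castSucc) j
  invFun := fun j => Fin.lastCases (last n) (fun i => (σ.symm i).castSucc) j
  left_inv := fun j => by induction j using Fin.lastCases <;> simp
  right_inv := fun j => by induction j using Fin.lastCases <;> simp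

lemma snoc_comp_permExt {n : ℕ} (σ : Equiv.Perm (Fin n)) (v : Fin n → X) (x : X) :
    (snoc v x : Fin (n+1) → X) ∘ (permExt σ) = snoc (v ∘ σ) x := by
  funext j
  induction j using Fin.lastCases with
  | last => simp [permExt]
  | cast i => simp [permExt]

/-- A symmetric continuous multilinear map vanishing on the diagonal vanishes. -/
lemma eq_zero_of_diag_zero : ∀ (n : ℕ) (S : ContinuousMultilinearMap ℂ (fun _ : Fin n => X) F),
    (∀ (σ : Equiv.Perm (Fin n)) (v : Fin n → X), S (v ∘ σ) = S v) →
    (∀ u : X, S (fun _ => u) = 0) → S = 0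
  | 0, S, _, hdiag => by
      ext v
      have hv : v = fun _ => (0 : X) := funext fun i => i.elim0
      rw [hv]
      simpa using hdiag 0
  | (n+1), S, hsym, hdiag => by
      have key : ∀ (x : X) (v : Fin n → X), S (snoc v x) = 0 := by
        intro x
        set Sx : ContinuousMultilinearMap ℂ (fun _ : Fin n => X) F :=
          (ContinuousLinearMap.apply ℂ F x).compContinuousMultilinearMap S.curryRight with hSx
        have hSxApp : ∀ v : Fin n → X, Sx v = S (snoc v x) := by
          intro v
          simp [hSx]
        have hsym' : ∀ (σ : Equiv.Perm (Fin n)) (v : Fin n → X), Sx (v ∘ σ) = Sx v := by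
          intro σ v
          rw [hSxApp, hSxApp, ← snoc_comp_permExt σ v x, hsym]
        have hdiag' : ∀ u : X, Sx (fun _ => u) = 0 := by
          intro u
          have h0 : fderiv ℂ (fun v : X => S fun _ => v) u x = 0 := by
            have he : (fun v : X => S fun _ => v) = fun _ : X => (0 : F) := funext hdiag
            rw [he]
            simp
          rw [fderiv_diag, sum_update_eq S hsym u x] at h0
          rcases smul_eq_zero.mp h0 with h | h
          · exact absurd h (by exact_mod_cast Nat.succ_ne_zero n)
          · rw [hSxApp]; exact h
        have hz := eq_zero_of_diag_zero n Sx hsym' hdiag'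
        intro v
        rw [← hSxApp, hz]
        simp
      ext v
      rw [← Fin.snoc_init_self v]
      simpa using key (v (last n)) (init v)

lemma update_comp_move {n : ℕ} (m : Fin (n+1) → X) (a : Fin (n+1)) (x : X) :
    (snoc (a.removeNth m) x : Fin (n+1) → X) ∘ ((finSuccEquiv' a).trans finSuccEquivLast.symm)
      = update m a x := by
  funext j
  rcases eq_or_ne j a with rfl | hj
  · simp
  · obtain ⟨j', rfl⟩ := Fin.exists_succAbove_eq hj
    simp [Fin.removeNth, Function.update_of_ne (Fin.succAbove_ne a j')]

lemma update_exchange {k : ℕ} (Q : ContinuousMultilinearMap ℂ (fun _ : Fin (k+1) => X) (X →L[ℂ] ℂ))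
    (hQ : ∀ (σ : Equiv.Perm (Fin (k+1))) (v : Fin (k+1) → X), Q (v ∘ σ) = Q v)
    (hstar : ∀ (v : Fin k → X) (x y : X), Q (snoc v x) y = Q (snoc v y) x)
    (m : Fin (k+1) → X) (a : Fin (k+1)) (x y : X) :
    Q (update m a x) y = Q (update m a y) x := by
  rw [← update_comp_move m a x, ← update_comp_move m a y, hQ, hQ, hstar]

end Stmt5Aux

open Fin Function Stmt5Aux in
/-- Let `X` be a complex Banach space and `m = k + 2 ≥ 2`.  A continuous
`(m-1)`-homogeneous polynomial `Q ∈ 𝓟(^{m-1}X, X*)` (represented by its continuous symmetric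
`(m-1)`-linear map) is the differential `dP` of some `P ∈ 𝓟(^m X)` iff
`y ∘ d(x ∘ Q) = x ∘ d(y ∘ Q)` as elements of `𝓟(^{m-2}X)`, for all `x, y ∈ X`. -/
theorem stmt5 (X : Type*) [NormedAddCommGroup X] [NormedSpace ℂ X] [CompleteSpace X] (k : ℕ)
    (Q : ContinuousMultilinearMap ℂ (fun _ : Fin (k + 1) => X) (X →L[ℂ] ℂ))
    (hQ : ∀ (σ : Equiv.Perm (Fin (k + 1))) (v : Fin (k + 1) → X), Q (v ∘ σ) = Q v) :
    (∃ P : ContinuousMultilinearMap ℂ (fun _ : Fin (k + 2) => X) ℂ,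
        (∀ (σ : Equiv.Perm (Fin (k + 2))) (v : Fin (k + 2) → X), P (v ∘ σ) = P v) ∧
        ∀ u x : X, Q (fun _ => u) x = fderiv ℂ (fun v : X => P fun _ => v) u x) ↔
    (∀ x y : X,
        (fun u : X => fderiv ℂ (fun v : X => Q (fun _ => v) x) u y) =
          fun u : X => fderiv ℂ (fun v : X => Q (fun _ => v) y) u x) := by
  constructor
  · rintro ⟨P, hPsym, hP⟩ x y
    have hfun : ∀ z : X, (fun v : X => Q (fun _ => v) z)
        = fun v : X => (((k+1+1 : ℕ) : ℂ) •
            ((ContinuousLinearMap.apply ℂ ℂ z).compContinuousMultilinearMap P.curryRight))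
            (fun _ : Fin (k+1) => v) := by
      intro z
      funext v
      rw [hP v z, fderiv_diag P v z, sum_update_eq P hPsym v z]
      simp
    funext u
    rw [hfun x, hfun y, fderiv_diag, fderiv_diag]
    simp only [ContinuousMultilinearMap.smul_apply,
      ContinuousLinearMap.compContinuousMultilinearMap_coe, comp_apply,
      ContinuousLinearMap.apply_apply, ContinuousMultilinearMap.curryRight_apply]
    refine Finset.sum_congr rfl fun i _ => ?_
    congr 1
    have hcomp : (snoc (update (fun _ : Fin (k+1) => u) i x) y : Fin (k+2) → X)
        ∘ (Equiv.swap (castSucc i) (last (k+1))) = snoc (update (fun _ => u) i y) x := by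
      funext j
      induction j using Fin.lastCases with
      | last => rw [comp_apply, Equiv.swap_apply_right]; simp
      | cast j' =>
        rcases eq_or_ne j' i with rfl | hji
        · rw [comp_apply, Equiv.swap_apply_left]; simp
        · have h1 : castSucc j' ≠ castSucc i := by simpa [Fin.castSucc_inj] using hji
          have h2 : castSucc j' ≠ last (k+1) := (Fin.castSucc_lt_last j').ne
          rw [comp_apply, Equiv.swap_apply_of_ne_of_ne h1 h2]
          simp [Function.update_of_ne hji]
    rw [← hcomp, hPsym]
  · intro hrhs
    -- Step 1: the diagonal exchange identity.
    have hdiag : ∀ (u x y : X), Q (snoc (fun _ : Fin k => u) x) y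
        = Q (snoc (fun _ => u) y) x := by
      intro u x y
      have e : ∀ z w : X, fderiv ℂ (fun v : X => Q (fun _ : Fin (k+1) => v) z) u w
          = ((k+1 : ℕ) : ℂ) • Q (snoc (fun _ : Fin k => u) w) z := by
        intro z w
        set Qz := (ContinuousLinearMap.apply ℂ ℂ z).compContinuousMultilinearMap Q with hQz
        have hsymz : ∀ (σ : Equiv.Perm (Fin (k+1))) (v : Fin (k+1) → X),
            Qz (v ∘ σ) = Qz v := by
          intro σ v
          simp [hQz, hQ σ v]
        have hf : (fun v : X => Q (fun _ : Fin (k+1) => v) z)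
            = fun v : X => Qz (fun _ : Fin (k+1) => v) := by
          funext v; simp [hQz]
        rw [hf, fderiv_diag, sum_update_eq Qz hsymz u w]
        simp [hQz]
      have h := congrFun (hrhs y x) u
      rw [e, e] at h
      have hc : ((k+1 : ℕ) : ℂ) ≠ 0 := by exact_mod_cast Nat.succ_ne_zero k
      exact smul_right_injective ℂ hc h
    -- Step 2: the full exchange identity, via vanishing on the diagonal.
    have hstar : ∀ (v : Fin k → X) (x y : X), Q (snoc v x) y = Q (snoc v y) x := by
      intro v x y
      set B : X → X → ContinuousMultilinearMap ℂ (fun _ : Fin k => X) ℂ := fun a b =>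
        ((ContinuousLinearMap.apply ℂ ℂ b).comp
          (ContinuousLinearMap.apply ℂ (X →L[ℂ] ℂ) a)).compContinuousMultilinearMap
          Q.curryRight with hB
      have hBapp : ∀ (a b : X) (w : Fin k → X), B a b w = Q (snoc w a) b := by
        intro a b w
        simp [hB]
      have hsymB : ∀ (σ : Equiv.Perm (Fin k)) (w : Fin k → X),
          (B x y - B y x) (w ∘ σ) = (B x y - B y x) w := by
        intro σ w
        have hBs : ∀ a b : X, B a b (w ∘ σ) = B a b w := by
          intro a b
          rw [hBapp, hBapp, ← snoc_comp_permExt σ w a, hQ]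
        simp [ContinuousMultilinearMap.sub_apply, hBs]
      have hdiagB : ∀ u : X, (B x y - B y x) (fun _ => u) = 0 := by
        intro u
        simp only [ContinuousMultilinearMap.sub_apply, hBapp]
        rw [hdiag u x y, sub_self]
      have hz := eq_zero_of_diag_zero k (B x y - B y x) hsymB hdiagB
      have h := congrArg (fun M : ContinuousMultilinearMap ℂ (fun _ : Fin k => X) ℂ => M v) hz
      simp only [ContinuousMultilinearMap.sub_apply, ContinuousMultilinearMap.zero_apply,
        sub_eq_zero, hBapp] at h
      exact h
    have hexch := update_exchange Q hQ hstar
    -- Step 3: build `P` from the uncurried map.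
    set R : ContinuousMultilinearMap ℂ (fun _ : Fin (k+2) => X) ℂ := Q.uncurryRight with hR
    have hRapp : ∀ v : Fin (k+2) → X, R v = Q (init v) (v (last (k+1))) := fun v => rfl
    have hswap_last : ∀ (a : Fin (k+2)) (v : Fin (k+2) → X),
        R (v ∘ Equiv.swap a (last (k+1))) = R v := by
      intro a v
      rcases Fin.eq_castSucc_or_eq_last a with ⟨a', rfl⟩ | rfl
      · have h1 : init (v ∘ Equiv.swap (castSucc a') (last (k+1)))
            = update (init v) a' (v (last (k+1))) := by
          funext j
          rcases eq_or_ne j a' with rfl | hj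
          · simp [init, Equiv.swap_apply_left]
          · have h1' : castSucc j ≠ castSucc a' := by simpa [Fin.castSucc_inj] using hj
            simp [init, Equiv.swap_apply_of_ne_of_ne h1' (Fin.castSucc_lt_last j).ne,
              Function.update_of_ne hj]
        have h2 : (v ∘ Equiv.swap (castSucc a') (last (k+1))) (last (k+1))
            = v (castSucc a') := by
          simp [Equiv.swap_apply_right]
        rw [hRapp, h1, h2, hRapp]
        have hv : v (castSucc a') = init v a' := rfl
        rw [hv, hexch (init v) a' (v (last (k+1))) (init v a'), Function.update_eq_self]
      · simp [Equiv.swap_self]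
    have hswap : ∀ (a b : Fin (k+2)) (v : Fin (k+2) → X),
        R (v ∘ Equiv.swap a b) = R v := by
      intro a b v
      rcases Fin.eq_castSucc_or_eq_last b with ⟨b', rfl⟩ | rfl
      · rcases Fin.eq_castSucc_or_eq_last a with ⟨a', rfl⟩ | rfl
        · have h1 : init (v ∘ Equiv.swap (castSucc a') (castSucc b'))
              = init v ∘ Equiv.swap a' b' := by
            funext j
            have hs : Equiv.swap (castSucc a') (castSucc b') (castSucc j)
                = castSucc (Equiv.swap a' b' j) := by
              rcases eq_or_ne j a' with rfl | hja
              · simp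
              · rcases eq_or_ne j b' with rfl | hjb
                · simp
                · rw [Equiv.swap_apply_of_ne_of_ne (by simpa [Fin.castSucc_inj] using hja)
                    (by simpa [Fin.castSucc_inj] using hjb),
                    Equiv.swap_apply_of_ne_of_ne hja hjb]
            simp [init, hs]
          have h2 : (v ∘ Equiv.swap (castSucc a') (castSucc b')) (last (k+1))
              = v (last (k+1)) := by
            simp [Equiv.swap_apply_of_ne_of_ne (Fin.castSucc_lt_last a').ne'
              (Fin.castSucc_lt_last b').ne']
          rw [hRapp, h1, h2, hQ (Equiv.swap a' b'), ← hRapp]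
        · rw [Equiv.swap_comm]
          exact hswap_last _ v
      · exact hswap_last a v
    have hperm : ∀ (σ : Equiv.Perm (Fin (k+2))) (v : Fin (k+2) → X), R (v ∘ σ) = R v := by
      intro σ
      refine Equiv.Perm.swap_induction_on σ (fun v => by simp) ?_
      intro f a b hab ih v
      have hc : v ∘ ⇑(Equiv.swap a b * f) = (v ∘ ⇑(Equiv.swap a b)) ∘ ⇑f := by
        rw [Equiv.Perm.coe_mul]; rfl
      rw [hc, ih, hswap]
    have hPsym : ∀ (σ : Equiv.Perm (Fin (k+2))) (v : Fin (k+2) → X),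
        ((((k+2 : ℕ) : ℂ)⁻¹) • R) (v ∘ σ) = ((((k+2 : ℕ) : ℂ)⁻¹) • R) v := by
      intro σ v
      simp [hperm σ v]
    refine ⟨(((k+2 : ℕ) : ℂ)⁻¹) • R, hPsym, ?_⟩
    intro u x
    rw [fderiv_diag, sum_update_eq _ hPsym u x]
    have hcc : ((k+1+1 : ℕ) : ℂ) ≠ 0 := by exact_mod_cast Nat.succ_ne_zero (k+1)
    simp only [ContinuousMultilinearMap.smul_apply, smul_smul]
    rw [show ((k+2 : ℕ) : ℂ) = ((k+1+1 : ℕ) : ℂ) by push_cast; ring, mul_inv_cancel₀ hcc,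
      one_smul, hRapp]
    simp
end

section
/- Let X be a complex Banach space, m ≥ 2, and let x*, y* be nonzero elements of X*. The (m−1)-homogeneous polynomial Q ∈ 𝓟(^{m−1}X, X*) given by Q(u) = x*(u)^{m−1} · y* satisfies Q = dP for some P ∈ 𝓟(^m X) if and only if x* = α y* for some α ∈ ℂ. -/
/-- Let `X` be a complex Banach space, `m = k + 2 ≥ 2`, and `x*, y* ∈ X*`
nonzero.  The `(m-1)`-homogeneous polynomial `Q(u) = x*(u)^{m-1} • y*` is the differential `dP`
of some `P ∈ 𝓟(^m X)` iff `x* = α y*` for some `α ∈ ℂ`. -/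
theorem stmt6 (X : Type*) [NormedAddCommGroup X] [NormedSpace ℂ X] [CompleteSpace X] (k : ℕ)
    (xs ys : X →L[ℂ] ℂ) (hxs : xs ≠ 0) (hys : ys ≠ 0)
    (Q : X → (X →L[ℂ] ℂ)) (hQ : ∀ u : X, Q u = (xs u) ^ (k + 1) • ys) :
    (∃ P : ContinuousMultilinearMap ℂ (fun _ : Fin (k + 2) => X) ℂ,
        (∀ (σ : Equiv.Perm (Fin (k + 2))) (v : Fin (k + 2) → X), P (v ∘ σ) = P v) ∧
        ∀ u x : X, Q u x = fderiv ℂ (fun v : X => P fun _ => v) u x) ↔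
    ∃ α : ℂ, xs = α • ys := by
  constructor
  · rintro ⟨P, -, hP⟩
    set L : ℂ →L[ℂ] (X →L[ℂ] ℂ) :=
      ContinuousLinearMap.smulRight (ContinuousLinearMap.id ℂ ℂ) ys with hL
    have hdiff : ∀ u : X, HasFDerivAt (fun v : X => P fun _ => v)
        ((xs u) ^ (k + 1) • ys) u := by
      intro u
      have hd : HasFDerivAt (fun v : X => P fun _ => v)
          (∑ i : Fin (k + 2),
            (P.toContinuousLinearMap (fun _ => u) i) ∘L (ContinuousLinearMap.id ℂ X)) u :=
        HasFDerivAt.multilinear_comp P (g := fun _ x => x)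
          (g' := fun _ => ContinuousLinearMap.id ℂ X) (fun _ => hasFDerivAt_id u)
      have heq : (xs u) ^ (k + 1) • ys =
          ∑ i : Fin (k + 2),
            (P.toContinuousLinearMap (fun _ => u) i) ∘L (ContinuousLinearMap.id ℂ X) := by
        ext x
        have h1 := hP u x
        rw [hQ u] at h1
        rw [← hd.fderiv]
        exact h1
      rw [heq]
      exact hd
    obtain ⟨u₀, hu₀⟩ : ∃ u₀ : X, xs u₀ ≠ 0 := by
      by_contra h
      push_neg at h
      exact hxs (ContinuousLinearMap.ext fun x => h x)
    have hφ : HasFDerivAt (fun u : X => (xs u) ^ (k + 1))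
        ((((k + 1 : ℕ) : ℂ) * (xs u₀) ^ k) • xs) u₀ := by
      simpa [Function.comp_def] using (hasDerivAt_pow (k + 1) (xs u₀)).comp_hasFDerivAt u₀ xs.hasFDerivAt
    have h2 : HasFDerivAt (fun u : X => (xs u) ^ (k + 1) • ys)
        (L.comp ((((k + 1 : ℕ) : ℂ) * (xs u₀) ^ k) • xs)) u₀ :=
      (L.hasFDerivAt).comp u₀ hφ
    have hsymm := second_derivative_symmetric hdiff h2
    have hc : (((k + 1 : ℕ) : ℂ) * (xs u₀) ^ k) ≠ 0 :=
      mul_ne_zero (Nat.cast_ne_zero.mpr (Nat.succ_ne_zero k)) (pow_ne_zero k hu₀)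
    have key : ∀ v w : X, xs v * ys w = xs w * ys v := by
      intro v w
      have h := hsymm v w
      simp only [ContinuousLinearMap.coe_comp', Function.comp_apply,
        ContinuousLinearMap.coe_smul', Pi.smul_apply, ContinuousLinearMap.smulRight_apply,
        ContinuousLinearMap.id_apply, smul_eq_mul, hL] at h
      apply mul_left_cancel₀ hc
      linear_combination h
    obtain ⟨w₀, hw₀⟩ : ∃ w₀ : X, ys w₀ ≠ 0 := by
      by_contra h
      push_neg at h
      exact hys (ContinuousLinearMap.ext fun x => h x)
    refine ⟨xs w₀ / ys w₀, ContinuousLinearMap.ext fun v => ?_⟩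
    simp only [ContinuousLinearMap.coe_smul', Pi.smul_apply, smul_eq_mul]
    rw [div_mul_eq_mul_div, eq_div_iff hw₀]
    linear_combination key v w₀
  · rintro ⟨α, rfl⟩
    have h2 : ((k : ℂ) + 2) ≠ 0 := by
      have : ((k + 2 : ℕ) : ℂ) ≠ 0 := Nat.cast_ne_zero.mpr (by omega)
      push_cast at this
      exact this
    set c : ℂ := α ^ (k + 1) / ((k : ℂ) + 2) with hc
    set P : ContinuousMultilinearMap ℂ (fun _ : Fin (k + 2) => X) ℂ :=
      c • ((ContinuousMultilinearMap.mkPiAlgebra ℂ (Fin (k + 2)) ℂ).compContinuousLinearMap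
        fun _ => ys) with hPdef
    have hPapp : ∀ v : Fin (k + 2) → X, P v = c * ∏ i, ys (v i) := by
      intro v
      simp [hPdef]
    refine ⟨P, ?_, ?_⟩
    · intro σ v
      rw [hPapp, hPapp]
      congr 1
      exact Equiv.prod_comp σ (fun i => ys (v i))
    · intro u x
      have hfun : (fun v : X => P fun _ => v) = fun v : X => c * (ys v) ^ (k + 2) := by
        funext v
        rw [hPapp]
        simp [Finset.prod_const]
      rw [hfun]
      have hd : HasFDerivAt (fun v : X => c * (ys v) ^ (k + 2))
          (c • ((((k + 2 : ℕ) : ℂ) * (ys u) ^ (k + 1)) • ys)) u := by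
        simpa using
          (((hasDerivAt_pow (k + 2) (ys u)).comp_hasFDerivAt u ys.hasFDerivAt).const_mul c)
      rw [hd.fderiv]
      rw [hQ u]
      simp only [ContinuousLinearMap.coe_smul', Pi.smul_apply, smul_eq_mul]
      push_cast
      rw [hc]
      field_simp
      ring
end

section
/- Let X be a complex Banach space with unit sphere S_X, m ≥ 2, and Q ∈ 𝓟(^{m−1}X, X*). Then Q = dP for some P ∈ 𝓟(^m X) if and only if y∘d(x∘Q) = x∘d(y∘Q) for all x, y ∈ S_X. Consequently, 𝓗^∞_s(B_X, X*) coincides with the set of g ∈ 𝓗^∞(B_X, X*) satisfying y∘d(x∘g) = x∘d(y∘g) for every x, y ∈ S_X. -/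
section Stmt9Aux

open Function Fin

set_option linter.unusedSectionVars false


section Helpers
variable {X : Type*} [NormedAddCommGroup X] [NormedSpace ℂ X]

lemma update_const_comp {n : ℕ} (u x : X) (i : Fin n) (e : Equiv.Perm (Fin n)) :
    (Function.update (fun _ : Fin n => u) i x) ∘ ⇑e = Function.update (fun _ => u) (e.symm i) x := by
  funext l
  simp [Function.update_apply, Equiv.apply_eq_iff_eq_symm_apply]

lemma collapse {n : ℕ} {E : Type*} [NormedAddCommGroup E] [NormedSpace ℂ E]
    (f : ContinuousMultilinearMap ℂ (fun _ : Fin n => X) E)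
    (hf : ∀ (σ : Equiv.Perm (Fin n)) (v : Fin n → X), f (v ∘ σ) = f v)
    (u x : X) (i j : Fin n) :
    f (Function.update (fun _ => u) i x) = f (Function.update (fun _ => u) j x) := by
  have h := hf (Equiv.swap i j) (Function.update (fun _ => u) j x)
  rw [update_const_comp] at h
  simpa using h

lemma hasFDerivAt_diag {n : ℕ} {E : Type*} [NormedAddCommGroup E] [NormedSpace ℂ E]
    (f : ContinuousMultilinearMap ℂ (fun _ : Fin n => X) E) (u : X) :
    HasFDerivAt (fun v : X => f (fun _ => v))
      ((f.linearDeriv (fun _ => u)).comp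
        (ContinuousLinearMap.pi fun _ : Fin n => ContinuousLinearMap.id ℂ X)) u := by
  have h1 := f.hasFDerivAt (x := fun _ : Fin n => u)
  have h2 := (ContinuousLinearMap.pi fun _ : Fin n => ContinuousLinearMap.id ℂ X).hasFDerivAt (x := u)
  exact h1.comp u h2

lemma fderiv_diag_apply {n : ℕ} (f : ContinuousMultilinearMap ℂ (fun _ : Fin n => X) ℂ) (u x : X) :
    fderiv ℂ (fun v : X => f (fun _ => v)) u x = ∑ i : Fin n, f (Function.update (fun _ => u) i x) := by
  rw [(hasFDerivAt_diag f u).fderiv]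
  simp

lemma hasFDerivAt_diag_apply {n : ℕ} (f : ContinuousMultilinearMap ℂ (fun _ : Fin n => X) (X →L[ℂ] ℂ))
    (u x : X) :
    HasFDerivAt (fun v : X => f (fun _ => v) x)
      ((ContinuousLinearMap.apply ℂ ℂ x).comp ((f.linearDeriv (fun _ => u)).comp
        (ContinuousLinearMap.pi fun _ : Fin n => ContinuousLinearMap.id ℂ X))) u :=
  ((ContinuousLinearMap.apply ℂ ℂ x).hasFDerivAt).comp u (hasFDerivAt_diag f u)

lemma fderiv_diag_apply' {n : ℕ} (f : ContinuousMultilinearMap ℂ (fun _ : Fin n => X) (X →L[ℂ] ℂ))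
    (u x y : X) :
    fderiv ℂ (fun v : X => f (fun _ => v) x) u y
      = ∑ i : Fin n, f (Function.update (fun _ => u) i y) x := by
  rw [(hasFDerivAt_diag_apply f u x).fderiv]
  simp [ContinuousMultilinearMap.sum_apply]

lemma double_update_swap {n : ℕ} (f : ContinuousMultilinearMap ℂ (fun _ : Fin n => X) ℂ)
    (hf : ∀ (σ : Equiv.Perm (Fin n)) (v : Fin n → X), f (v ∘ σ) = f v)
    (u x y : X) (a b : Fin n) (hab : a ≠ b) :
    f (Function.update (Function.update (fun _ => u) a y) b x)
      = f (Function.update (Function.update (fun _ => u) a x) b y) := by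
  have h := hf (Equiv.swap a b) (Function.update (Function.update (fun _ => u) a x) b y)
  rw [← h]
  congr 1
  funext l
  rcases eq_or_ne l a with rfl | ha
  · simp [Function.update_apply, hab, hab.symm, Equiv.swap_apply_left]
  rcases eq_or_ne l b with rfl | hb
  · simp [Function.update_apply, hab, hab.symm, Equiv.swap_apply_right]
  · simp [Function.update_apply, ha, hb, Equiv.swap_apply_of_ne_of_ne ha hb]

lemma snoc_update_eq {n : ℕ} (u x y : X) (i : Fin (n + 1)) :
    (Fin.snoc (Function.update (fun _ : Fin (n + 1) => u) i y) x : Fin (n + 2) → X)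
      = Function.update (Function.update (fun _ : Fin (n + 2) => u) i.castSucc y)
          (Fin.last (n + 1)) x := by
  funext l
  refine Fin.lastCases ?_ (fun m => ?_) l
  · simp
  · rw [Fin.snoc_castSucc]
    rw [Function.update_apply, Function.update_apply, Function.update_apply]
    simp [(Fin.castSucc_lt_last m).ne, Fin.castSucc_inj]

lemma snoc_const_eq {n : ℕ} (u x : X) :
    (Fin.snoc (fun _ : Fin (n + 1) => u) x : Fin (n + 2) → X)
      = Function.update (fun _ : Fin (n + 2) => u) (Fin.last (n + 1)) x := by
  funext l
  refine Fin.lastCases ?_ (fun m => ?_) l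
  · simp
  · simp [Function.update_apply, (Fin.castSucc_lt_last m).ne]

end Helpers

end Stmt9Aux

open Function Fin in
/-- Let `X` be a complex Banach space with unit sphere `S_X`, `m = k + 2 ≥ 2`,
and `Q ∈ 𝓟(^{m-1}X, X*)`.  Then `Q = dP` for some `P ∈ 𝓟(^m X)` iff
`y ∘ d(x ∘ Q) = x ∘ d(y ∘ Q)` for all `x, y ∈ S_X`.  Consequently `𝓗^∞_s(B_X, X*)` coincides
with the set of `g ∈ 𝓗^∞(B_X, X*)` satisfying `y ∘ d(x ∘ g) = x ∘ d(y ∘ g)` for every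
`x, y ∈ S_X`. -/
theorem stmt9 (X : Type*) [NormedAddCommGroup X] [NormedSpace ℂ X] [CompleteSpace X] (k : ℕ)
    (Q : ContinuousMultilinearMap ℂ (fun _ : Fin (k + 1) => X) (X →L[ℂ] ℂ))
    (hQ : ∀ (σ : Equiv.Perm (Fin (k + 1))) (v : Fin (k + 1) → X), Q (v ∘ σ) = Q v) :
    ((∃ P : ContinuousMultilinearMap ℂ (fun _ : Fin (k + 2) => X) ℂ,
        (∀ (σ : Equiv.Perm (Fin (k + 2))) (v : Fin (k + 2) → X), P (v ∘ σ) = P v) ∧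
        ∀ u x : X, Q (fun _ => u) x = fderiv ℂ (fun v : X => P fun _ => v) u x) ↔
      (∀ x y : X, ‖x‖ = 1 → ‖y‖ = 1 → ∀ u : X,
        fderiv ℂ (fun v : X => Q (fun _ => v) x) u y =
          fderiv ℂ (fun v : X => Q (fun _ => v) y) u x)) ∧
    (∀ g : X → (X →L[ℂ] ℂ),
      DifferentiableOn ℂ g (Metric.ball (0 : X) 1) →
      (∃ C : ℝ, ∀ z ∈ Metric.ball (0 : X) 1, ‖g z‖ ≤ C) →
      ((∀ x y : X, ∀ z ∈ Metric.ball (0 : X) 1,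
          fderiv ℂ (fun u => g u x) z y = fderiv ℂ (fun u => g u y) z x) ↔
        (∀ x y : X, ‖x‖ = 1 → ‖y‖ = 1 → ∀ z ∈ Metric.ball (0 : X) 1,
          fderiv ℂ (fun u => g u x) z y = fderiv ℂ (fun u => g u y) z x))) := by
  constructor
  · constructor
    · rintro ⟨P, hP, hPQ⟩
      intro x y _ _ u
      set R := P.curryRight with hR
      have hPQ' : ∀ u x : X, Q (fun _ => u) x = ((k : ℂ) + 2) * (R (fun _ => u) x) := by
        intro u x
        rw [hPQ u x, fderiv_diag_apply]
        have h1 : ∀ j : Fin (k + 2), P (Function.update (fun _ => u) j x)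
            = R (fun _ : Fin (k + 1) => u) x := by
          intro j
          rw [collapse P hP u x j (Fin.last (k + 1)), hR, ContinuousMultilinearMap.curryRight_apply,
            snoc_const_eq]
        simp_rw [h1]
        simp [Finset.sum_const, Finset.card_univ, nsmul_eq_mul]
      -- derivative of both sides
      have hder : ∀ w u : X, HasFDerivAt (fun v : X => Q (fun _ => v) w)
          (((k : ℂ) + 2) • ((ContinuousLinearMap.apply ℂ ℂ w).comp ((R.linearDeriv (fun _ => u)).comp
            (ContinuousLinearMap.pi fun _ : Fin (k + 1) => ContinuousLinearMap.id ℂ X)))) u := by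
        intro w u
        have base := (hasFDerivAt_diag_apply R u w).const_mul ((k : ℂ) + 2)
        exact base.congr_of_eventuallyEq (Filter.Eventually.of_forall fun v => hPQ' v w)
      rw [(hder x u).fderiv, (hder y u).fderiv]
      simp only [ContinuousLinearMap.coe_smul', Pi.smul_apply, ContinuousLinearMap.coe_comp',
        Function.comp_apply, ContinuousLinearMap.apply_apply, ContinuousMultilinearMap.linearDeriv_apply,
        ContinuousLinearMap.pi_apply, ContinuousLinearMap.id_apply,
        ContinuousLinearMap.sum_apply]
      congr 1
      refine Finset.sum_congr rfl fun i _ => ?_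
      rw [hR, ContinuousMultilinearMap.curryRight_apply, ContinuousMultilinearMap.curryRight_apply,
        snoc_update_eq, snoc_update_eq]
      exact double_update_swap P hP u x y i.castSucc (Fin.last (k + 1)) (Fin.castSucc_lt_last i).ne
    · intro hsym
      have hk1 : ((k : ℂ) + 1) ≠ 0 := by
        have : ((k + 1 : ℕ) : ℂ) ≠ 0 := Nat.cast_ne_zero.mpr (by omega)
        simpa using this
      have hk2 : ((k : ℂ) + 2) ≠ 0 := by
        have : ((k + 2 : ℕ) : ℂ) ≠ 0 := Nat.cast_ne_zero.mpr (by omega)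
        simpa using this
      have unit : ∀ w : X, w ≠ 0 → ‖((‖w‖ : ℂ))⁻¹ • w‖ = 1 := by
        intro w hw
        rw [norm_smul, norm_inv, Complex.norm_real, Real.norm_eq_abs, abs_norm]
        exact inv_mul_cancel₀ (norm_ne_zero_iff.2 hw)
      -- the key symmetry identity, first on the sphere, then in general
      have key1 : ∀ (u x y : X), ‖x‖ = 1 → ‖y‖ = 1 →
          Q (Function.update (fun _ => u) 0 y) x = Q (Function.update (fun _ => u) 0 x) y := by
        intro u x y hx hy
        have h := hsym x y hx hy u
        rw [fderiv_diag_apply', fderiv_diag_apply'] at h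
        have e1 : ∀ z w : X, ∑ i : Fin (k + 1), Q (Function.update (fun _ => u) i z) w
            = ((k : ℂ) + 1) * Q (Function.update (fun _ => u) 0 z) w := by
          intro z w
          rw [Finset.sum_congr rfl (fun i _ => by rw [collapse Q hQ u z i 0])]
          simp [Finset.sum_const, Finset.card_univ, nsmul_eq_mul]
        rw [e1, e1] at h
        exact mul_left_cancel₀ hk1 h
      have key : ∀ u x y : X,
          Q (Function.update (fun _ => u) 0 y) x = Q (Function.update (fun _ => u) 0 x) y := by
        intro u x y
        rcases eq_or_ne x 0 with rfl | hx0
        · have h0 : Q (Function.update (fun _ : Fin (k + 1) => u) 0 (0 : X)) = 0 :=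
            Q.map_coord_zero 0 (by simp)
          rw [h0]; simp
        rcases eq_or_ne y 0 with rfl | hy0
        · have h0 : Q (Function.update (fun _ : Fin (k + 1) => u) 0 (0 : X)) = 0 :=
            Q.map_coord_zero 0 (by simp)
          rw [h0]; simp
        have h := key1 u (((‖x‖ : ℂ))⁻¹ • x) (((‖y‖ : ℂ))⁻¹ • y) (unit x hx0) (unit y hy0)
        rw [Q.map_update_smul, Q.map_update_smul] at h
        simp only [ContinuousLinearMap.coe_smul', Pi.smul_apply, map_smul, smul_eq_mul] at h
        have hcx : ((‖x‖ : ℂ)) ≠ 0 := by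
          simpa using norm_ne_zero_iff.2 hx0
        have hcy : ((‖y‖ : ℂ)) ≠ 0 := by
          simpa using norm_ne_zero_iff.2 hy0
        field_simp at h
        exact h
      -- construction of the symmetrization
      classical
      set U : ContinuousMultilinearMap ℂ (fun _ : Fin (k + 2) => X) ℂ :=
        ContinuousMultilinearMap.uncurryRight (Ei := fun _ : Fin (k + 2) => X) Q with hUdef
      have hUapp : ∀ w : Fin (k + 2) → X,
          U w = Q (fun i : Fin (k + 1) => w i.castSucc) (w (Fin.last (k + 1))) := fun w => rfl
      have hU : ∀ (τ : Equiv.Perm (Fin (k + 2))), τ (Fin.last (k + 1)) = Fin.last (k + 1) →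
          ∀ w, U (w ∘ τ) = U w := by
        intro τ hτ w
        have hne : ∀ i : Fin (k + 1), τ i.castSucc ≠ Fin.last (k + 1) := by
          intro i h
          exact (Fin.castSucc_lt_last i).ne (τ.injective (h.trans hτ.symm))
        have hinj : Function.Injective (fun i : Fin (k + 1) => (τ i.castSucc).castPred (hne i)) := by
          intro a b h
          have h2 : τ a.castSucc = τ b.castSucc := by
            have := congrArg Fin.castSucc h
            rwa [Fin.castSucc_castPred, Fin.castSucc_castPred] at this
          exact Fin.castSucc_injective _ (τ.injective h2)
        let τ' : Equiv.Perm (Fin (k + 1)) :=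
          Equiv.ofBijective _ (Finite.injective_iff_bijective.mp hinj)
        have hτ' : ∀ i : Fin (k + 1), Fin.castSucc (τ' i) = τ i.castSucc := fun i =>
          Fin.castSucc_castPred (τ i.castSucc) (hne i)
        rw [hUapp, hUapp]
        have h1 : (fun i : Fin (k + 1) => (w ∘ τ) i.castSucc)
            = (fun i : Fin (k + 1) => w i.castSucc) ∘ τ' := by
          funext i
          simp only [Function.comp_apply]
          rw [hτ' i]
        have h2 : (w ∘ τ) (Fin.last (k + 1)) = w (Fin.last (k + 1)) := by
          simp [Function.comp_apply, hτ]
        rw [h1, h2, hQ]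
      set S : ContinuousMultilinearMap ℂ (fun _ : Fin (k + 2) => X) ℂ :=
        ∑ j : Fin (k + 2), (ContinuousMultilinearMap.domDomCongr
          (Equiv.swap j (Fin.last (k + 1))) U) with hSdef
      have hSapp : ∀ w, S w = ∑ j : Fin (k + 2), U (w ∘ Equiv.swap j (Fin.last (k + 1))) := by
        intro w
        rw [hSdef, ContinuousMultilinearMap.sum_apply]
        exact Finset.sum_congr rfl fun j _ => rfl
      have hSsymm : ∀ (σ : Equiv.Perm (Fin (k + 2))) v, S (v ∘ σ) = S v := by
        intro σ v
        rw [hSapp, hSapp]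
        calc ∑ j : Fin (k + 2), U ((v ∘ σ) ∘ Equiv.swap j (Fin.last (k + 1)))
            = ∑ j : Fin (k + 2), U (v ∘ Equiv.swap (σ j) (Fin.last (k + 1))) := by
              refine Finset.sum_congr rfl fun j _ => ?_
              have hfun : (v ∘ ⇑σ) ∘ ⇑(Equiv.swap j (Fin.last (k + 1)))
                  = (v ∘ ⇑(Equiv.swap (σ j) (Fin.last (k + 1)))) ∘
                    ⇑(((Equiv.swap j (Fin.last (k + 1))).trans σ).trans
                      (Equiv.swap (σ j) (Fin.last (k + 1)))) := by
                funext l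
                simp [Function.comp_apply, Equiv.swap_apply_self]
              rw [hfun, hU _ (by simp) _]
          _ = ∑ j : Fin (k + 2), U (v ∘ Equiv.swap j (Fin.last (k + 1))) :=
              Equiv.sum_comp σ (fun j => U (v ∘ Equiv.swap j (Fin.last (k + 1))))
      have hUterm : ∀ (u x : X) (m : Fin (k + 2)),
          U (Function.update (fun _ => u) m x) = Q (fun _ => u) x := by
        intro u x m
        rw [hUapp]
        rcases eq_or_ne m (Fin.last (k + 1)) with rfl | hm
        · have h1 : (fun i : Fin (k + 1) =>
              Function.update (fun _ : Fin (k + 2) => u) (Fin.last (k + 1)) x i.castSucc)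
              = fun _ => u := by
            funext i
            rw [Function.update_apply, if_neg (Fin.castSucc_lt_last i).ne]
          rw [h1, Function.update_self]
        · obtain ⟨m', rfl⟩ := Fin.exists_castSucc_eq.mpr hm
          have h1 : (fun i : Fin (k + 1) =>
              Function.update (fun _ : Fin (k + 2) => u) m'.castSucc x i.castSucc)
              = Function.update (fun _ : Fin (k + 1) => u) m' x := by
            funext i
            rw [Function.update_apply, Function.update_apply]
            simp [Fin.castSucc_inj]
          have h2 : Function.update (fun _ : Fin (k + 2) => u) m'.castSucc x (Fin.last (k + 1)) = u := by
            rw [Function.update_apply, if_neg (Ne.symm (Fin.castSucc_lt_last m').ne)]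
          rw [h1, h2, collapse Q hQ u x m' 0, key u u x,
            show Function.update (fun _ : Fin (k + 1) => u) 0 u = fun _ => u from
              funext fun l => by rw [Function.update_apply]; split <;> rfl]
      have hSdiag : ∀ (u x : X) (i : Fin (k + 2)),
          S (Function.update (fun _ => u) i x) = ((k : ℂ) + 2) * (Q (fun _ => u) x) := by
        intro u x i
        rw [hSapp]
        have h1 : ∀ j : Fin (k + 2),
            U (Function.update (fun _ : Fin (k + 2) => u) i x ∘ Equiv.swap j (Fin.last (k + 1)))
              = Q (fun _ => u) x := by
          intro j
          rw [update_const_comp, hUterm]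
        simp_rw [h1]
        simp [Finset.sum_const, Finset.card_univ, nsmul_eq_mul]
      refine ⟨(((k : ℂ) + 2) ^ 2)⁻¹ • S, fun σ v => ?_, fun u x => ?_⟩
      · rw [ContinuousMultilinearMap.smul_apply, ContinuousMultilinearMap.smul_apply, hSsymm]
      · rw [fderiv_diag_apply]
        simp_rw [ContinuousMultilinearMap.smul_apply, hSdiag]
        simp only [Finset.sum_const, Finset.card_univ, Fintype.card_fin, nsmul_eq_mul,
          smul_eq_mul, Nat.cast_add, Nat.cast_ofNat]
        field_simp
  · intro g hdiff _
    constructor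
    · intro h x y _ _ z hz; exact h x y z hz
    · intro hs x y z hz
      have hg : DifferentiableAt ℂ g z := hdiff.differentiableAt (Metric.isOpen_ball.mem_nhds hz)
      have hd : ∀ w : X, DifferentiableAt ℂ (fun u => g u w) z := fun w =>
        ((ContinuousLinearMap.apply ℂ ℂ w).differentiableAt).comp z hg
      have hlin : ∀ (c : ℂ) (w v : X),
          fderiv ℂ (fun u => g u (c • w)) z v = c * fderiv ℂ (fun u => g u w) z v := by
        intro c w v
        have hfe : (fun u => g u (c • w)) = fun u => c * (g u w) := by
          funext u; rw [(g u).map_smul]; rfl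
        rw [hfe, fderiv_const_mul (hd w) c]
        simp
      have main : ∀ a b : X, ‖a‖ = 1 → ‖b‖ = 1 → ∀ c d : ℂ,
          fderiv ℂ (fun u => g u (c • a)) z (d • b) = fderiv ℂ (fun u => g u (d • b)) z (c • a) := by
        intro a b ha hb c d
        rw [hlin c a, hlin d b, (fderiv ℂ (fun u => g u a) z).map_smul,
          (fderiv ℂ (fun u => g u b) z).map_smul, hs a b ha hb z hz]
        simp [smul_eq_mul]; ring
      have unit : ∀ w : X, w ≠ 0 → ‖((‖w‖ : ℂ))⁻¹ • w‖ = 1 := by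
        intro w hw
        rw [norm_smul, norm_inv, Complex.norm_real, Real.norm_eq_abs, abs_norm]
        exact inv_mul_cancel₀ (norm_ne_zero_iff.2 hw)
      rcases eq_or_ne x 0 with rfl | hx0
      · have h0 : (fun u => g u (0 : X)) = fun _ => (0 : ℂ) := funext fun u => (g u).map_zero
        rw [h0]; simp
      rcases eq_or_ne y 0 with rfl | hy0
      · have h0 : (fun u => g u (0 : X)) = fun _ => (0 : ℂ) := funext fun u => (g u).map_zero
        rw [h0]; simp
      · have hx : x = (‖x‖ : ℂ) • (((‖x‖ : ℂ))⁻¹ • x) := by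
          rw [smul_inv_smul₀]
          simpa using hx0
        have hy : y = (‖y‖ : ℂ) • (((‖y‖ : ℂ))⁻¹ • y) := by
          rw [smul_inv_smul₀]
          simpa using hy0
        calc fderiv ℂ (fun u => g u x) z y
            = fderiv ℂ (fun u => g u ((‖x‖ : ℂ) • (((‖x‖ : ℂ))⁻¹ • x))) z
                ((‖y‖ : ℂ) • (((‖y‖ : ℂ))⁻¹ • y)) := by rw [← hx, ← hy]
          _ = fderiv ℂ (fun u => g u ((‖y‖ : ℂ) • (((‖y‖ : ℂ))⁻¹ • y))) z
                ((‖x‖ : ℂ) • (((‖x‖ : ℂ))⁻¹ • x)) :=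
              main _ _ (unit x hx0) (unit y hy0) _ _
          _ = fderiv ℂ (fun u => g u y) z x := by rw [← hx, ← hy]
end

section
/- Let X be a complex Banach space, m ≥ 2, and Q ∈ 𝓟(^{m−1}X, X*) with associated continuous symmetric (m−1)-linear map Q̌. If Q̌(u,…,u,y)(x) = Q̌(u,…,u,x)(y) for all u, x, y ∈ X, then Q̌(u₁,…,u_{m−2}, y)(x) = Q̌(u₁,…,u_{m−2}, x)(y) for all u₁,…,u_{m−2}, x, y ∈ X. -/
/-- Let `X` be a complex Banach space, `m = k + 2 ≥ 2`, and `Q̌` the continuous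
symmetric `(m-1)`-linear map associated to `Q ∈ 𝓟(^{m-1}X, X*)`.  If
`Q̌(u,…,u,y)(x) = Q̌(u,…,u,x)(y)` for all `u, x, y ∈ X`, then
`Q̌(u₁,…,u_{m-2},y)(x) = Q̌(u₁,…,u_{m-2},x)(y)` for all `u₁,…,u_{m-2}, x, y ∈ X`. -/
theorem stmt10 (X : Type*) [NormedAddCommGroup X] [NormedSpace ℂ X] [CompleteSpace X] (k : ℕ)
    (Q : ContinuousMultilinearMap ℂ (fun _ : Fin (k + 1) => X) (X →L[ℂ] ℂ))
    (hQ : ∀ (σ : Equiv.Perm (Fin (k + 1))) (v : Fin (k + 1) → X), Q (v ∘ σ) = Q v)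
    (h : ∀ u x y : X,
      Q (Fin.snoc (fun _ : Fin k => u) y) x = Q (Fin.snoc (fun _ : Fin k => u) x) y) :
    ∀ (u : Fin k → X) (x y : X), Q (Fin.snoc u y) x = Q (Fin.snoc u x) y := by
  intro v₀ x y
  classical
  set L : (X →L[ℂ] X →L[ℂ] ℂ) →ₗ[ℂ] ℂ :=
    { toFun := fun φ => φ y x - φ x y
      map_add' := by intro a b; simp; ring
      map_smul' := by intro c a; simp; ring } with hL
  set S : MultilinearMap ℂ (fun _ : Fin k => X) ℂ :=
    L.compMultilinearMap (Q.curryRight).toMultilinearMap with hSdef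
  have hS : ∀ w : Fin k → X, S w = Q (Fin.snoc w y) x - Q (Fin.snoc w x) y := fun w => rfl
  have hQsnoc : ∀ (a b : Fin k) (w : Fin k → X) (z : X),
      Q (Fin.snoc (w ∘ Equiv.swap a b) z) = Q (Fin.snoc w z) := by
    intro a b w z
    have key : (Fin.snoc (w ∘ Equiv.swap a b) z : Fin (k + 1) → X)
        = (Fin.snoc w z : Fin (k + 1) → X) ∘ (Equiv.swap a.castSucc b.castSucc) := by
      funext m
      refine Fin.lastCases ?_ ?_ m
      · rw [Function.comp_apply,
          Equiv.swap_apply_of_ne_of_ne (Fin.castSucc_lt_last a).ne'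
            (Fin.castSucc_lt_last b).ne']
        simp
      · intro p
        have hsw : Equiv.swap a.castSucc b.castSucc p.castSucc
            = (Equiv.swap a b p).castSucc := by
          rcases eq_or_ne p a with rfl | hpa
          · simp
          · rcases eq_or_ne p b with rfl | hpb
            · simp
            · rw [Equiv.swap_apply_of_ne_of_ne hpa hpb,
                Equiv.swap_apply_of_ne_of_ne (by simpa using hpa) (by simpa using hpb)]
        rw [Function.comp_apply, hsw]
        simp
    rw [key, hQ]
  have hSswap : ∀ (a b : Fin k) (w : Fin k → X), S (w ∘ Equiv.swap a b) = S w := by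
    intro a b w; rw [hS, hS, hQsnoc, hQsnoc]
  suffices H : ∀ j : ℕ, ∀ (v : Fin k → X) (u : X), (∀ i : Fin k, j ≤ i.1 → v i = u) →
      S v = 0 by
    have h0 := H k v₀ 0 (fun i hi => absurd i.isLt (by omega))
    rw [hS] at h0
    exact sub_eq_zero.mp h0
  intro j
  induction j with
  | zero =>
    intro v u hv
    have hvc : v = fun _ => u := funext fun i => hv i (Nat.zero_le _)
    rw [hvc, hS, h u x y, sub_self]
  | succ j ih =>
    intro v u hv
    by_cases hjk : j < k
    · set jj : Fin k := ⟨j, hjk⟩ with hjj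
      set d := v jj with hd
      set base : Fin k → X := fun i => if i.1 < j then v i else u with hbase
      have hvu : v = Function.update base jj d := by
        funext i
        rcases lt_trichotomy i.1 j with hij | hij | hij
        · rw [Function.update_of_ne (by simp [Fin.ext_iff, hjj]; omega)]
          simp [hbase, hij]
        · have hii : i = jj := Fin.ext hij
          rw [hii, Function.update_self]
        · rw [Function.update_of_ne (by simp [Fin.ext_iff, hjj]; omega)]
          have : v i = u := hv i (by omega)
          simp [hbase, this]
      set tail : Finset (Fin k) := Finset.univ.filter (fun i => j ≤ i.1) with htail
      have hjjtail : jj ∈ tail := by simp [htail, hjj]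
      set P : Polynomial ℂ := ∑ s ∈ tail.powerset,
          Polynomial.C (S (s.piecewise (fun _ => d) base)) * Polynomial.X ^ s.card with hP
      have heval : ∀ t : ℂ, P.eval t = 0 := by
        intro t
        have h1 : S (tail.piecewise ((fun _ => t • d) + base) base) = 0 := by
          apply ih _ (t • d + u)
          intro i hi
          have hit : i ∈ tail := by simp [htail, hi]
          rw [Finset.piecewise_eq_of_mem _ _ _ hit, Pi.add_apply]
          have : base i = u := by simp [hbase]; omega
          rw [this]
        rw [MultilinearMap.map_piecewise_add] at h1
        have h2 : ∀ s ∈ tail.powerset,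
            S (s.piecewise (fun _ => t • d) base)
              = t ^ s.card * S (s.piecewise (fun _ => d) base) := by
          intro s _
          have e1 : s.piecewise (fun _ => t • d) base
              = s.piecewise (fun i => (fun _ : Fin k => t) i •
                  (s.piecewise (fun _ => d) base) i) (s.piecewise (fun _ => d) base) := by
            funext i
            by_cases his : i ∈ s
            · simp [Finset.piecewise_eq_of_mem _ _ _ his]
            · simp [Finset.piecewise_eq_of_notMem _ _ _ his]
          rw [e1, MultilinearMap.map_piecewise_smul]
          simp [Finset.prod_const, smul_eq_mul]
        rw [Finset.sum_congr rfl h2] at h1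
        rw [hP]
        simp only [Polynomial.eval_finset_sum, Polynomial.eval_mul, Polynomial.eval_C,
          Polynomial.eval_pow, Polynomial.eval_X]
        rw [← h1]
        exact Finset.sum_congr rfl (fun s _ => mul_comm _ _)
      have hP0 : P = 0 := Polynomial.funext (fun r => by rw [heval r, Polynomial.eval_zero])
      have hc1 : P.coeff 1 = 0 := by rw [hP0]; simp
      rw [hP] at hc1
      simp only [Polynomial.finset_sum_coeff, Polynomial.coeff_C_mul,
        Polynomial.coeff_X_pow, mul_ite, mul_one, mul_zero] at hc1
      have hc2 : ∑ s ∈ tail.powerset.filter (fun s => s.card = 1),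
          S (s.piecewise (fun _ => d) base) = 0 := by
        rw [Finset.sum_filter]
        rw [Finset.sum_congr rfl (fun s (_ : s ∈ tail.powerset) => (by
          rcases eq_or_ne s.card 1 with hcs | hcs
          · simp [hcs]
          · rw [if_neg hcs, if_neg (fun hh => hcs hh.symm)] :
            (if s.card = 1 then S (s.piecewise (fun _ => d) base) else 0)
              = if 1 = s.card then S (s.piecewise (fun _ => d) base) else 0))]
        exact hc1
      rw [← Finset.powersetCard_eq_filter, Finset.powersetCard_one, Finset.sum_map] at hc2
      have hc3 : ∑ i ∈ tail, S (Function.update base i d) = 0 := by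
        rw [← hc2]
        exact Finset.sum_congr rfl (fun i _ => by
          rw [Function.Embedding.coeFn_mk, Finset.piecewise_singleton])
      have hswap : ∀ i ∈ tail, S (Function.update base i d)
          = S (Function.update base jj d) := by
        intro i hi
        have hbi : base i = u := by
          have : j ≤ i.1 := by simpa [htail] using hi
          simp [hbase]; omega
        have hbjj : base jj = u := by simp [hbase, hjj]
        have hupd : Function.update base i d
            = (Function.update base jj d) ∘ (Equiv.swap i jj) := by
          funext m
          rcases eq_or_ne m i with rfl | hmi
          · rw [Function.update_self, Function.comp_apply, Equiv.swap_apply_left,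
              Function.update_self]
          · rcases eq_or_ne m jj with rfl | hmjj
            · rw [Function.update_of_ne (Ne.symm hmi).symm, Function.comp_apply,
                Equiv.swap_apply_right]
              rcases eq_or_ne i jj with rfl | hijj
              · exact absurd rfl hmi
              · rw [Function.update_of_ne hijj, hbjj, hbi]
            · rw [Function.update_of_ne hmi, Function.comp_apply,
                Equiv.swap_apply_of_ne_of_ne hmi hmjj, Function.update_of_ne hmjj]
        rw [hupd, hSswap]
      rw [Finset.sum_congr rfl hswap, Finset.sum_const] at hc3
      have hcard : (tail.card : ℂ) ≠ 0 := by
        have : 0 < tail.card := Finset.card_pos.mpr ⟨jj, hjjtail⟩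
        exact_mod_cast Nat.cast_ne_zero.mpr this.ne'
      rw [nsmul_eq_mul] at hc3
      have := (mul_eq_zero.mp hc3).resolve_left hcard
      rw [hvu]
      exact this
    · exact ih v u (fun i hi => absurd i.isLt (by omega))
end

section
/- Let X be a complex Banach space with a Schauder basis {eₙ}ₙ and let g ∈ 𝓗^∞(B_X, X*). Write gₙ = eₙ∘g : B_X → ℂ, i.e. gₙ(x) = g(x)(eₙ). Then g = df for some f ∈ 𝓗𝓛₀(B_X) if and only if (∂gₙ/∂x_k)(x) = (∂g_k/∂xₙ)(x) for every x ∈ B_X and all k, n ∈ ℕ, where (∂gₙ/∂x_k)(x) denotes the directional derivative d(gₙ)(x)(e_k). -/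
set_option maxHeartbeats 1000000

open Metric Set MeasureTheory Filter

private lemma coord_fderiv {X : Type*} [NormedAddCommGroup X] [NormedSpace ℂ X]
    {g : X → (X →L[ℂ] ℂ)} {x : X} (hx : DifferentiableAt ℂ g x) (c : X) :
    fderiv ℂ (fun u => g u c) x = (fderiv ℂ g x).flip c := by
  have h := (hx.hasFDerivAt.clm_apply (hasFDerivAt_const c x)).fderiv
  simpa using h

private lemma cauchy_fderiv_bound {X E : Type*} [NormedAddCommGroup X] [NormedSpace ℂ X]
    [NormedAddCommGroup E] [NormedSpace ℂ E]
    {g : X → E} (hg : DifferentiableOn ℂ g (ball (0 : X) 1))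
    {C : ℝ} (hC : ∀ z ∈ ball (0 : X) 1, ‖g z‖ ≤ C)
    {r : ℝ} (hr : r < 1) {z : X} (hz : ‖z‖ ≤ r) :
    ‖fderiv ℂ g z‖ ≤ C / ((1 - r) / 2) := by
  have hr0 : 0 ≤ r := le_trans (norm_nonneg z) hz
  set ρ : ℝ := (1 - r) / 2 with hρdef
  have hρ : 0 < ρ := by rw [hρdef]; linarith
  have hC0 : 0 ≤ C := le_trans (norm_nonneg (g 0)) (hC 0 (by simp))
  have hzball : z ∈ ball (0 : X) 1 := by
    rw [mem_ball_zero_iff]; exact lt_of_le_of_lt hz hr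
  apply ContinuousLinearMap.opNorm_le_bound _ (by positivity)
  intro v
  rcases eq_or_ne v 0 with rfl | hv
  · simp
  · have hvn : 0 < ‖v‖ := norm_pos_iff.mpr hv
    set R : ℝ := ρ / ‖v‖ with hR
    have hR0 : 0 < R := by positivity
    set φ : ℂ → E := fun w => g (z + w • v) with hφ
    have hmaps : ∀ w : ℂ, ‖w‖ ≤ R → z + w • v ∈ ball (0 : X) 1 := by
      intro w hw
      rw [mem_ball_zero_iff]
      calc ‖z + w • v‖ ≤ ‖z‖ + ‖w‖ * ‖v‖ := by
            simpa [norm_smul] using norm_add_le z (w • v)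
        _ ≤ r + R * ‖v‖ := by gcongr
        _ = r + ρ := by rw [hR]; field_simp
        _ < 1 := by rw [hρdef]; linarith
    have hA : Differentiable ℂ (fun w : ℂ => z + w • v) :=
      (differentiable_id.smul_const v).const_add z
    have hφdiff : DifferentiableOn ℂ φ (closedBall (0 : ℂ) R) :=
      hg.comp hA.differentiableOn
        (fun w hw => hmaps w (by simpa [mem_closedBall_zero_iff] using hw))
    have hdc : DiffContOnCl ℂ φ (ball (0 : ℂ) R) :=
      DifferentiableOn.diffContOnCl (by rwa [closure_ball (0 : ℂ) hR0.ne'])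
    have hsph : ∀ w ∈ sphere (0 : ℂ) R, ‖φ w‖ ≤ C := by
      intro w hw
      exact hC _ (hmaps w (by simp [mem_sphere_zero_iff_norm] at hw; exact hw.le))
    have hder : HasDerivAt φ (fderiv ℂ g z v) 0 := by
      have h1 : HasDerivAt (fun w : ℂ => z + w • v) v 0 := by
        simpa using ((hasDerivAt_id (0 : ℂ)).smul_const v).const_add z
      have h2 : HasFDerivAt g (fderiv ℂ g z) ((fun w : ℂ => z + w • v) 0) := by
        simpa using (hg.differentiableAt (isOpen_ball.mem_nhds hzball)).hasFDerivAt
      exact h2.comp_hasDerivAt 0 h1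
    have hest := Complex.norm_deriv_le_of_forall_mem_sphere_norm_le hR0 hdc hsph
    rw [hder.deriv] at hest
    calc ‖fderiv ℂ g z v‖ ≤ C / R := hest
      _ = C / ρ * ‖v‖ := by rw [hR]; field_simp

private lemma key_hasFDerivAt {X : Type*} [NormedAddCommGroup X] [NormedSpace ℂ X]
    {g : X → (X →L[ℂ] ℂ)} (hg : DifferentiableOn ℂ g (ball (0 : X) 1))
    {C : ℝ} (hC : ∀ z ∈ ball (0 : X) 1, ‖g z‖ ≤ C)
    (hsymm : ∀ z ∈ ball (0 : X) 1, (fderiv ℂ g z).flip = fderiv ℂ g z)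
    {x₀ : X} (hx₀ : x₀ ∈ ball (0 : X) 1) :
    HasFDerivAt (fun x : X => ∫ t in Ioc (0 : ℝ) 1, g (t • x) x) (g x₀) x₀ := by
  haveI : SecondCountableTopologyEither ℝ (X →L[ℂ] ℂ) := ⟨Or.inl inferInstance⟩
  have hx0n : ‖x₀‖ < 1 := mem_ball_zero_iff.mp hx₀
  have hC0 : 0 ≤ C := le_trans (norm_nonneg (g 0)) (hC 0 (by simp))
  set ε : ℝ := (1 - ‖x₀‖) / 2 with hεdef
  have hε : 0 < ε := by rw [hεdef]; linarith
  set r : ℝ := (1 + ‖x₀‖) / 2 with hrdef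
  have hr1 : r < 1 := by rw [hrdef]; linarith
  set ρ : ℝ := (1 - r) / 2 with hρdef
  have hρ : 0 < ρ := by rw [hρdef]; linarith
  have hball : ∀ x ∈ ball x₀ ε, ‖x‖ < r := by
    intro x hx
    have : ‖x - x₀‖ < ε := by rwa [mem_ball, dist_eq_norm] at hx
    calc ‖x‖ = ‖x₀ + (x - x₀)‖ := by rw [show x₀ + (x - x₀) = x by abel]
      _ ≤ ‖x₀‖ + ‖x - x₀‖ := norm_add_le _ _
      _ < ‖x₀‖ + ε := by linarith
      _ = r := by rw [hεdef, hrdef]; ring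
  have hsm : ∀ (t : ℝ) (x : X), t ∈ Icc (0:ℝ) 1 → ‖x‖ < 1 → t • x ∈ ball (0 : X) 1 := by
    intro t x ht hx
    rw [mem_ball_zero_iff, norm_smul, Real.norm_eq_abs, abs_of_nonneg ht.1]
    calc t * ‖x‖ ≤ 1 * ‖x‖ := by gcongr; exact ht.2
      _ < 1 := by simpa using hx
  -- the candidate derivative of the integrand
  set F' : X → ℝ → (X →L[ℂ] ℂ) :=
    fun x t => g (t • x) + t • ((fderiv ℂ g (t • x)).flip x) with hF'def
  -- pointwise differentiability in x
  have h_hasF : ∀ (t : ℝ), t ∈ Icc (0:ℝ) 1 → ∀ (x : X), ‖x‖ < 1 →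
      HasFDerivAt (fun y : X => g (t • y) y) (F' x t) x := by
    intro t ht x hx
    have hgd : DifferentiableAt ℂ g (t • x) :=
      hg.differentiableAt (isOpen_ball.mem_nhds (hsm t x ht hx))
    have hsmul : HasFDerivAt (fun y : X => t • y) (t • ContinuousLinearMap.id ℂ X) x := by
      exact (t • ContinuousLinearMap.id ℂ X).hasFDerivAt
    have hGd : HasFDerivAt (fun y : X => g (t • y))
        ((fderiv ℂ g (t • x)).comp (t • ContinuousLinearMap.id ℂ X)) x :=
      hgd.hasFDerivAt.comp x hsmul
    have h := hGd.clm_apply (hasFDerivAt_id x)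
    refine h.congr_fderiv ?_
    rw [hF'def]
    ext v
    simp [ContinuousLinearMap.smul_apply, smul_comm]
  -- continuity of the integrand in t
  have hFcont : ∀ (x : X), ‖x‖ < 1 → ContinuousOn (fun t : ℝ => g (t • x) x) (Icc 0 1) := by
    intro x hx
    have h1 : ContinuousOn (fun t : ℝ => g (t • x)) (Icc 0 1) :=
      hg.continuousOn.comp ((continuous_id.smul continuous_const).continuousOn)
        (fun t ht => hsm t x ht hx)
    exact (ContinuousLinearMap.apply ℂ ℂ x).continuous.comp_continuousOn h1
  -- the one-dimensional slice
  set R₀ : ℝ := 2 - ‖x₀‖ with hR₀def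
  have hR₀1 : 1 < R₀ := by rw [hR₀def]; linarith
  have hmem' : ∀ s : ℂ, ‖s‖ < R₀ → s • x₀ ∈ ball (0 : X) 1 := by
    intro s hs
    rw [mem_ball_zero_iff, norm_smul]
    have h0 : 0 < 1 - ‖x₀‖ := by linarith
    have h2 : 0 < (1 - ‖x₀‖)^2 := by positivity
    nlinarith [norm_nonneg s, norm_nonneg x₀]
  set H : ℂ → (X →L[ℂ] ℂ) := fun s => g (s • x₀) with hHdef
  have hHd : DifferentiableOn ℂ H (ball (0:ℂ) R₀) :=
    hg.comp ((differentiable_id.smul_const x₀).differentiableOn)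
      (fun s hs => hmem' s (mem_ball_zero_iff.mp hs))
  have hHa : AnalyticOnNhd ℂ H (ball (0:ℂ) R₀) := hHd.analyticOnNhd isOpen_ball
  have hmemIcc : ∀ t : ℝ, t ∈ Icc (0:ℝ) 1 → (t : ℂ) ∈ ball (0:ℂ) R₀ := by
    intro t ht
    rw [mem_ball_zero_iff]
    simp only [Complex.norm_real, Real.norm_eq_abs, abs_of_nonneg ht.1]
    linarith [ht.2]
  have hH' : ∀ s ∈ ball (0:ℂ) R₀, HasDerivAt H (fderiv ℂ g (s • x₀) x₀) s := by
    intro s hs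
    have h1 : HasDerivAt (fun w : ℂ => w • x₀) x₀ s := by
      simpa using (hasDerivAt_id s).smul_const x₀
    exact (hg.differentiableAt
      (isOpen_ball.mem_nhds (hmem' s (mem_ball_zero_iff.mp hs)))).hasFDerivAt.comp_hasDerivAt s h1
  have hderivH : ∀ s ∈ ball (0:ℂ) R₀, deriv H s = fderiv ℂ g (s • x₀) x₀ :=
    fun s hs => (hH' s hs).deriv
  have hHdc : ContinuousOn (deriv H) (ball (0:ℂ) R₀) := hHa.deriv.continuousOn
  have hcoe : ∀ (t : ℝ) (y : X), (t : ℂ) • y = t • y := by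
    intro t y
    exact (RCLike.real_smul_eq_coe_smul (K := ℂ) t y).symm
  -- ψ' is the nice formula for F' x₀
  set ψ' : ℝ → (X →L[ℂ] ℂ) := fun t => H t + t • deriv H t with hψ'def
  set ψ : ℝ → (X →L[ℂ] ℂ) := fun t => t • H t with hψdef
  have hψder : ∀ t ∈ Icc (0:ℝ) 1, HasDerivAt ψ (ψ' t) t := by
    intro t ht
    have hH0 : HasDerivAt H (deriv H (t : ℂ)) (t : ℂ) :=
      (hHd.differentiableAt (isOpen_ball.mem_nhds (hmemIcc t ht))).hasDerivAt
    have hH1 : HasDerivAt (fun s : ℝ => H s) (deriv H t) t := by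
      have h := HasDerivAt.scomp (𝕜 := ℝ) t hH0 Complex.ofRealCLM.hasDerivAt
      simp at h
      exact h
    have := (hasDerivAt_id t).smul hH1
    simp [add_comm] at this
    simp only [hψdef, hψ'def]
    exact this
  have hcontψ' : ContinuousOn ψ' (Icc (0:ℝ) 1) := by
    have hof : ContinuousOn (fun t : ℝ => (t:ℂ)) (Icc (0:ℝ) 1) :=
      Complex.continuous_ofReal.continuousOn
    have h1 : ContinuousOn (fun t : ℝ => H t) (Icc (0:ℝ) 1) :=
      hHd.continuousOn.comp hof hmemIcc
    have h2 : ContinuousOn (fun t : ℝ => deriv H t) (Icc (0:ℝ) 1) :=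
      hHdc.comp hof hmemIcc
    exact h1.add (continuousOn_id.smul h2)
  have hkey : ∀ t ∈ Icc (0:ℝ) 1, F' x₀ t = ψ' t := by
    intro t ht
    have hb : t • x₀ ∈ ball (0 : X) 1 := hsm t x₀ ht hx0n
    rw [hF'def, hψ'def]
    simp only
    rw [hsymm _ hb, hHdef]
    simp only [hcoe t x₀]
    rw [hderivH t (hmemIcc t ht)]
    simp [hcoe t x₀]
  -- the FTC computation
  have hFTC : ∫ t in Ioc (0:ℝ) 1, F' x₀ t = g x₀ := by
    rw [setIntegral_congr_fun measurableSet_Ioc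
      (fun t ht => hkey t (Ioc_subset_Icc_self ht))]
    rw [← intervalIntegral.integral_of_le zero_le_one]
    have := intervalIntegral.integral_eq_sub_of_hasDerivAt
      (f := ψ) (f' := ψ')
      (fun t ht => hψder t (by rwa [uIcc_of_le zero_le_one] at ht))
      (hcontψ'.intervalIntegrable_of_Icc zero_le_one)
    rw [this]
    have e1 : ψ 1 = g x₀ := by
      show (1:ℝ) • H ((1:ℝ):ℂ) = g x₀
      rw [one_smul]
      show g (((1:ℝ):ℂ) • x₀) = g x₀
      rw [hcoe, one_smul]
    have e0 : ψ 0 = 0 := by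
      show (0:ℝ) • H ((0:ℝ):ℂ) = 0
      exact zero_smul ℝ (H ((0:ℝ):ℂ))
    rw [e1, e0, sub_zero]
  -- apply the dominated-derivative theorem
  have main := hasFDerivAt_integral_of_dominated_of_fderiv_le
    (𝕜 := ℂ) (μ := volume.restrict (Ioc (0:ℝ) 1))
    (F := fun x t => g (t • x) x) (F' := F') (x₀ := x₀)
    (bound := fun _ => C + C / ρ) (ball_mem_nhds x₀ hε)
    (by
      filter_upwards [isOpen_ball.mem_nhds (mem_ball_self hε)] with x hx
      exact ((hFcont x (lt_trans (hball x hx) hr1)).mono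
        Ioc_subset_Icc_self).aestronglyMeasurable measurableSet_Ioc)
    (((hFcont x₀ hx0n).integrableOn_Icc).mono_set Ioc_subset_Icc_self)
    (by
      refine (((hcontψ'.mono Ioc_subset_Icc_self).aestronglyMeasurable
        measurableSet_Ioc).congr ?_)
      filter_upwards [ae_restrict_mem measurableSet_Ioc] with t ht
      exact (hkey t (Ioc_subset_Icc_self ht)).symm)
    (by
      filter_upwards [ae_restrict_mem measurableSet_Ioc] with t ht x hx
      have htI : t ∈ Icc (0:ℝ) 1 := Ioc_subset_Icc_self ht
      have hxr : ‖x‖ < r := hball x hx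
      have htx : ‖t • x‖ ≤ r := by
        rw [norm_smul, Real.norm_eq_abs, abs_of_nonneg htI.1]
        calc t * ‖x‖ ≤ 1 * ‖x‖ := by gcongr; exact htI.2
          _ ≤ r := by simpa using hxr.le
      have hfb : ‖fderiv ℂ g (t • x)‖ ≤ C / ρ := by
        rw [hρdef]
        exact cauchy_fderiv_bound hg hC hr1 htx
      calc ‖F' x t‖ ≤ ‖g (t • x)‖ + ‖t • ((fderiv ℂ g (t • x)).flip x)‖ := norm_add_le _ _
        _ ≤ C + C / ρ := by
            have h1 : ‖g (t • x)‖ ≤ C := hC _ (hsm t x htI (lt_trans hxr hr1))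
            have h2 : ‖t • ((fderiv ℂ g (t • x)).flip x)‖ ≤ C / ρ := by
              have hMx : ‖(fderiv ℂ g (t • x)).flip x‖ ≤ C / ρ := by
                calc ‖(fderiv ℂ g (t • x)).flip x‖
                    ≤ ‖(fderiv ℂ g (t • x)).flip‖ * ‖x‖ :=
                      (fderiv ℂ g (t • x)).flip.le_opNorm x
                  _ ≤ (C / ρ) * 1 := by
                      apply mul_le_mul _ (lt_trans hxr hr1).le (norm_nonneg x) (by positivity)
                      rw [ContinuousLinearMap.opNorm_flip]; exact hfb
                  _ = C / ρ := mul_one _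
              calc ‖t • ((fderiv ℂ g (t • x)).flip x)‖
                  = |t| * ‖(fderiv ℂ g (t • x)).flip x‖ := by
                    rw [norm_smul, Real.norm_eq_abs]
                _ ≤ 1 * (C / ρ) := by
                    apply mul_le_mul _ hMx (norm_nonneg _) zero_le_one
                    rw [abs_of_nonneg htI.1]; exact htI.2
                _ = C / ρ := one_mul _
            linarith)
    (by
      exact integrableOn_const (by simp [Real.volume_Ioc]))
    (by
      filter_upwards [ae_restrict_mem measurableSet_Ioc] with t ht x hx
      exact h_hasF t (Ioc_subset_Icc_self ht) x (lt_trans (hball x hx) hr1))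
  rwa [hFTC] at main


/-- Let `X` be a complex Banach space with a Schauder basis `{eₙ}` and
`g ∈ 𝓗^∞(B_X, X*)`, with coordinates `gₙ = eₙ ∘ g`.  Then `g = df` for some `f ∈ 𝓗𝓛₀(B_X)`
iff `∂gₙ/∂x_k (x) = ∂g_k/∂xₙ (x)` for every `x ∈ B_X` and all `k, n ∈ ℕ`, where
`∂gₙ/∂x_k (x) = d(gₙ)(x)(e_k)`. -/
theorem stmt12 (X : Type*) [NormedAddCommGroup X] [NormedSpace ℂ X] [CompleteSpace X]
    (e : ℕ → X)
    (hbasis : ∀ x : X, ∃! a : ℕ → ℂ,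
      Filter.Tendsto (fun N => ∑ n ∈ Finset.range N, a n • e n) Filter.atTop (nhds x))
    (g : X → (X →L[ℂ] ℂ))
    (hg : DifferentiableOn ℂ g (Metric.ball (0 : X) 1))
    (hgb : ∃ C : ℝ, ∀ z ∈ Metric.ball (0 : X) 1, ‖g z‖ ≤ C) :
    (∃ f : X → ℂ,
        (DifferentiableOn ℂ f (Metric.ball (0 : X) 1) ∧ f 0 = 0 ∧
          ∃ K : NNReal, LipschitzOnWith K f (Metric.ball (0 : X) 1)) ∧
        ∀ z ∈ Metric.ball (0 : X) 1, fderiv ℂ f z = g z) ↔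
    (∀ m n : ℕ, ∀ x ∈ Metric.ball (0 : X) 1,
      fderiv ℂ (fun u => g u (e n)) x (e m) = fderiv ℂ (fun u => g u (e m)) x (e n)) := by
  obtain ⟨C, hC⟩ := hgb
  constructor
  · rintro ⟨f, ⟨hfd, -, -⟩, hdf⟩ m n x hx
    have hgd : DifferentiableAt ℂ g x := hg.differentiableAt (isOpen_ball.mem_nhds hx)
    have hev : ∀ᶠ y in nhds x, HasFDerivAt f (g y) y := by
      filter_upwards [isOpen_ball.mem_nhds hx] with y hy
      have := (hfd.differentiableAt (isOpen_ball.mem_nhds hy)).hasFDerivAt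
      rwa [hdf y hy] at this
    have hsym := second_derivative_symmetric_of_eventually hev hgd.hasFDerivAt
    rw [coord_fderiv hgd (e n), coord_fderiv hgd (e m)]
    simpa using hsym (e m) (e n)
  · intro h
    -- density of the span of the basis vectors
    have hdense : Dense ((Submodule.span ℂ (Set.range e) : Submodule ℂ X) : Set X) := by
      intro x
      obtain ⟨a, ha, -⟩ := hbasis x
      exact mem_closure_of_tendsto ha (Filter.Eventually.of_forall fun N =>
        Submodule.sum_mem _ fun n _ =>
          Submodule.smul_mem _ _ (Submodule.subset_span ⟨n, rfl⟩))
    -- symmetry of the second differential at every point of the ball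
    have hsymm : ∀ z ∈ ball (0 : X) 1, (fderiv ℂ g z).flip = fderiv ℂ g z := by
      intro z hz
      have hgd : DifferentiableAt ℂ g z := hg.differentiableAt (isOpen_ball.mem_nhds hz)
      have hcoeff : ∀ m n : ℕ, fderiv ℂ g z (e m) (e n) = fderiv ℂ g z (e n) (e m) := by
        intro m n
        have := h m n z hz
        rw [coord_fderiv hgd (e n), coord_fderiv hgd (e m)] at this
        simpa using this
      apply ContinuousLinearMap.ext_on hdense
      rintro v ⟨m, rfl⟩
      apply ContinuousLinearMap.ext_on hdense
      rintro w ⟨n, rfl⟩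
      simpa using (hcoeff n m)
    refine ⟨fun x => ∫ t in Ioc (0 : ℝ) 1, g (t • x) x, ⟨?_, ?_, ?_⟩, ?_⟩
    · intro z hz
      exact (key_hasFDerivAt hg hC hsymm hz).differentiableAt.differentiableWithinAt
    · simp
    · refine ⟨C.toNNReal, ?_⟩
      apply (convex_ball (0 : X) 1).lipschitzOnWith_of_nnnorm_hasFDerivWithin_le
        (f' := g) (fun z hz => (key_hasFDerivAt hg hC hsymm hz).hasFDerivWithinAt)
      intro z hz
      rw [← norm_toNNReal]
      exact Real.toNNReal_mono (hC z hz)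
    · intro z hz
      exact (key_hasFDerivAt hg hC hsymm hz).fderiv
end

section
/- Let Y be a complex Banach space and 𝔻 the open unit disk in ℂ. The mapping Φ : 𝓗𝓛₀(𝔻, Y) → 𝓗^∞(𝔻, Y) given by Φ(f) = f′ is a surjective isometry: every bounded holomorphic g : 𝔻 → Y equals f′ for some holomorphic Lipschitz f : 𝔻 → Y with f(0) = 0, and L(f) = sup_{z∈𝔻} ‖f′(z)‖ for every f ∈ 𝓗𝓛₀(𝔻, Y). -/
open Metric Filter Nat

/-- Existence of a primitive on the unit disk, via termwise integration of the Taylor series. -/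
lemma stmt16_exists_primitive {Y : Type*} [NormedAddCommGroup Y] [NormedSpace ℂ Y]
    [CompleteSpace Y] (g : ℂ → Y) (hg : DifferentiableOn ℂ g (ball (0:ℂ) 1)) :
    ∃ f : ℂ → Y, f 0 = 0 ∧ ∀ z ∈ ball (0:ℂ) 1, HasDerivAt f (g z) z := by
  set a : ℕ → Y := fun n => (n ! : ℂ)⁻¹ • iteratedDeriv n g 0 with ha
  have hsum : ∀ z ∈ ball (0:ℂ) 1, HasSum (fun n => z ^ n • a n) (g z) := by
    intro z hz
    have H := Complex.hasSum_taylorSeries_on_ball hg hz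
    refine H.congr_fun fun n => ?_
    simp only [ha, sub_zero]
    rw [smul_comm]
  have hterm : ∀ (n : ℕ) (y : ℂ),
      HasDerivAt (fun w : ℂ => ((n : ℂ) + 1)⁻¹ • (w ^ (n + 1) • a n)) (y ^ n • a n) y := by
    intro n y
    have h1 : HasDerivAt (fun w : ℂ => w ^ (n + 1) • a n) ((((n : ℂ) + 1) * y ^ n) • a n) y := by
      have := (hasDerivAt_pow (n + 1) y).smul_const (a n)
      simpa [Nat.cast_add] using this
    have h2 := h1.const_smul (((n : ℂ) + 1)⁻¹)
    have hne : ((n : ℂ) + 1) ≠ 0 := Nat.cast_add_one_ne_zero n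
    have h3 : (((n : ℂ) + 1)⁻¹ • (((n : ℂ) + 1) * y ^ n) • a n) = y ^ n • a n := by
      rw [smul_smul, ← mul_assoc, inv_mul_cancel₀ hne, one_mul]
    rw [h3] at h2
    exact h2
  refine ⟨fun z => ∑' (n : ℕ), ((n : ℂ) + 1)⁻¹ • (z ^ (n + 1) • a n), by simp, ?_⟩
  intro z hz
  rw [mem_ball_zero_iff] at hz
  obtain ⟨s, hzs, hs1⟩ : ∃ s, ‖z‖ < s ∧ s < 1 := exists_between hz
  obtain ⟨r, hsr, hr1⟩ : ∃ r, s < r ∧ r < 1 := exists_between hs1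
  have hs0 : 0 < s := lt_of_le_of_lt (norm_nonneg z) hzs
  have hr0 : 0 < r := lt_trans hs0 hsr
  -- bound on the coefficients from summability at the point `r`
  have hrmem : (r : ℂ) ∈ ball (0:ℂ) 1 := by
    rw [mem_ball_zero_iff, Complex.norm_real, Real.norm_eq_abs, abs_of_pos hr0]; exact hr1
  have htend : Tendsto (fun n => ‖(r : ℂ) ^ n • a n‖) atTop (nhds 0) := by
    have := (hsum (r : ℂ) hrmem).summable.tendsto_atTop_zero
    have h := (continuous_norm.tendsto (0 : Y)).comp this
    rw [norm_zero] at h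
    exact h
  obtain ⟨B, hB⟩ : ∃ B, ∀ n, ‖(r : ℂ) ^ n • a n‖ ≤ B := by
    obtain ⟨B, hB⟩ := htend.bddAbove_range
    exact ⟨B, fun n => hB (Set.mem_range_self n)⟩
  have hBn : ∀ n, r ^ n * ‖a n‖ ≤ B := by
    intro n
    have := hB n
    rwa [norm_smul, norm_pow, Complex.norm_real, Real.norm_eq_abs, abs_of_pos hr0] at this
  have hu : Summable (fun n => B * (s / r) ^ n) := by
    refine (summable_geometric_of_lt_one (by positivity) ?_).mul_left B
    rw [div_lt_one hr0]; exact hsr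
  have hbound : ∀ (n : ℕ), ∀ y ∈ ball (0:ℂ) s, ‖y ^ n • a n‖ ≤ B * (s / r) ^ n := by
    intro n y hy
    have hys : ‖y‖ ≤ s := le_of_lt (mem_ball_zero_iff.mp hy)
    calc ‖y ^ n • a n‖ = ‖y‖ ^ n * ‖a n‖ := by rw [norm_smul, norm_pow]
      _ ≤ s ^ n * ‖a n‖ := by gcongr
      _ = (s / r) ^ n * (r ^ n * ‖a n‖) := by
          rw [div_pow, ← mul_assoc, div_mul_cancel₀ _ (by positivity : r ^ n ≠ 0)]
      _ ≤ (s / r) ^ n * B := by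
          have : (0:ℝ) ≤ (s / r) ^ n := by positivity
          exact mul_le_mul_of_nonneg_left (hBn n) this
      _ = B * (s / r) ^ n := mul_comm _ _
  have hmain : HasDerivAt (fun w => ∑' (n : ℕ), ((n : ℂ) + 1)⁻¹ • (w ^ (n + 1) • a n))
      (∑' (n : ℕ), z ^ n • a n) z := by
    refine hasDerivAt_tsum_of_isPreconnected hu isOpen_ball
      ((convex_ball (0:ℂ) s).isPreconnected) (fun n y _ => hterm n y) hbound
      (mem_ball_self hs0) ?_ (mem_ball_zero_iff.mpr hzs)
    exact summable_zero.congr fun n => by simp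
  have hts : (∑' (n : ℕ), z ^ n • a n) = g z := (hsum z (mem_ball_zero_iff.mpr hz)).tsum_eq
  rwa [hts] at hmain

/-- Let `Y` be a complex Banach space and `𝔻` the open unit disk in `ℂ`.
The map `Φ : 𝓗𝓛₀(𝔻, Y) → 𝓗^∞(𝔻, Y)`, `Φ f = f'`, is a surjective isometry: every bounded
holomorphic `g : 𝔻 → Y` equals `f'` for some holomorphic Lipschitz `f : 𝔻 → Y` with `f 0 = 0`,
and `L(f) = sup_{z ∈ 𝔻} ‖f'(z)‖` for every `f ∈ 𝓗𝓛₀(𝔻, Y)`. -/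
theorem stmt16 (Y : Type*) [NormedAddCommGroup Y] [NormedSpace ℂ Y] [CompleteSpace Y] :
    let D := Metric.ball (0 : ℂ) 1
    let HL0 : (ℂ → Y) → Prop := fun f =>
      DifferentiableOn ℂ f D ∧ f 0 = 0 ∧ ∃ K : NNReal, LipschitzOnWith K f D
    (∀ g : ℂ → Y, DifferentiableOn ℂ g D → (∃ C : ℝ, ∀ z ∈ D, ‖g z‖ ≤ C) →
      ∃ f : ℂ → Y, HL0 f ∧ ∀ z ∈ D, deriv f z = g z) ∧
    (∀ f : ℂ → Y, HL0 f →
      sInf {K : ℝ | 0 ≤ K ∧ ∀ x ∈ D, ∀ y ∈ D, ‖f x - f y‖ ≤ K * ‖x - y‖} =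
        sSup {r : ℝ | ∃ z ∈ D, r = ‖deriv f z‖}) := by
  intro D HL0
  constructor
  · -- surjectivity
    rintro g hg ⟨C, hC⟩
    obtain ⟨f, hf0, hfd⟩ := stmt16_exists_primitive g hg
    refine ⟨f, ⟨fun z hz => ((hfd z hz).differentiableAt).differentiableWithinAt, hf0,
      ⟨Real.toNNReal C, ?_⟩⟩, fun z hz => (hfd z hz).deriv⟩
    refine Convex.lipschitzOnWith_of_nnnorm_deriv_le
      (fun x hx => ((hfd x hx).differentiableAt)) ?_ (convex_ball (0:ℂ) 1)
    intro x hx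
    rw [← NNReal.coe_le_coe, coe_nnnorm, (hfd x hx).deriv]
    exact le_trans (hC x hx) (Real.le_coe_toNNReal C)
  · -- isometry
    rintro f ⟨hfd, hf0, K0, hK0⟩
    have hder : ∀ z ∈ D, HasDerivAt f (deriv f z) z := fun z hz =>
      (hfd.differentiableAt (Metric.isOpen_ball.mem_nhds hz)).hasDerivAt
    have key : ∀ K ∈ {K : ℝ | 0 ≤ K ∧ ∀ x ∈ D, ∀ y ∈ D, ‖f x - f y‖ ≤ K * ‖x - y‖},
        ∀ q ∈ {r : ℝ | ∃ z ∈ D, r = ‖deriv f z‖}, q ≤ K := by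
      rintro K ⟨hKnn, hK⟩ q ⟨z, hz, rfl⟩
      refine (hder z hz).le_of_lip' hKnn ?_
      filter_upwards [Metric.isOpen_ball.mem_nhds hz] with x hx
      exact hK x hx z hz
    have hKmem : (K0 : ℝ) ∈ {K : ℝ | 0 ≤ K ∧ ∀ x ∈ D, ∀ y ∈ D, ‖f x - f y‖ ≤ K * ‖x - y‖} :=
      ⟨K0.coe_nonneg, fun x hx y hy => hK0.norm_sub_le hx hy⟩
    have h0D : (0 : ℂ) ∈ D := mem_ball_self one_pos
    have hS2ne : {r : ℝ | ∃ z ∈ D, r = ‖deriv f z‖}.Nonempty := ⟨‖deriv f 0‖, 0, h0D, rfl⟩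
    have hbdd : BddAbove {r : ℝ | ∃ z ∈ D, r = ‖deriv f z‖} :=
      ⟨K0, fun q hq => key _ hKmem q hq⟩
    have hSup0 : 0 ≤ sSup {r : ℝ | ∃ z ∈ D, r = ‖deriv f z‖} :=
      le_trans (norm_nonneg (deriv f 0)) (le_csSup hbdd ⟨0, h0D, rfl⟩)
    have hlip : LipschitzOnWith (Real.toNNReal (sSup {r : ℝ | ∃ z ∈ D, r = ‖deriv f z‖})) f D := by
      refine Convex.lipschitzOnWith_of_nnnorm_deriv_le
        (fun x hx => hfd.differentiableAt (Metric.isOpen_ball.mem_nhds hx)) ?_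
        (convex_ball (0:ℂ) 1)
      intro x hx
      rw [← NNReal.coe_le_coe, coe_nnnorm, Real.coe_toNNReal _ hSup0]
      exact le_csSup hbdd ⟨x, hx, rfl⟩
    have hmem2 : sSup {r : ℝ | ∃ z ∈ D, r = ‖deriv f z‖} ∈
        {K : ℝ | 0 ≤ K ∧ ∀ x ∈ D, ∀ y ∈ D, ‖f x - f y‖ ≤ K * ‖x - y‖} := by
      refine ⟨hSup0, fun x hx y hy => ?_⟩
      have := hlip.norm_sub_le hx hy
      rwa [Real.coe_toNNReal _ hSup0] at this
    refine le_antisymm (csInf_le ⟨0, fun K hK => hK.1⟩ hmem2)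
      (csSup_le hS2ne fun q hq => le_csInf ⟨K0, hKmem⟩ fun K hK => key K hK q hq)
end
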